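/- arXiv:1509.02683 — 5 statements merged into one kernel-verified Lean document; each statement's English description precedes it below -/
import Mathlib

section
/- Fix H = (Σ, E) and let W_s and W_g be H-words of length n. There exists an H-word reconfiguration sequence from W_s to W_g if and only if there exists a sequence A_1,…,A_m of consistent subsets of {1,…,n} × Σ with A_1 = A(W_s), A_m = A(W_g), and each A_{i+1} obtained from A_i by adding or removing exactly one element. -/
/-- An H-word of length `n` (a word `W : Fin n → Alpha` whose consecutive
characters are related by `E`). -/
def IsHWord {Alpha : Type} (E : Set (Alpha × Alpha)) {n : ℕ} (W : Fin n → Alpha) : Prop :=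
  ∀ (p : ℕ) (h : p + 1 < n), (W ⟨p, Nat.lt_of_succ_lt h⟩, W ⟨p + 1, h⟩) ∈ E

/-- `A ⊆ {1,…,n} × Alpha` is consistent: every position has some character, and
characters allowed at consecutive positions are related by `E`. -/
def Consistent {Alpha : Type} (E : Set (Alpha × Alpha)) {n : ℕ}
    (A : Set (Fin n × Alpha)) : Prop :=
  (∀ p : Fin n, ∃ c : Alpha, (p, c) ∈ A) ∧
  ∀ (p : ℕ) (h : p + 1 < n) (a b : Alpha),
    ((⟨p, Nat.lt_of_succ_lt h⟩ : Fin n), a) ∈ A →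
    ((⟨p + 1, h⟩ : Fin n), b) ∈ A → (a, b) ∈ E

/-- `A(W)`, the set `{(p, W_p) : p}` associated to a word `W`. -/
def AOf {Alpha : Type} {n : ℕ} (W : Fin n → Alpha) : Set (Fin n × Alpha) :=
  {x | x.2 = W x.1}

/-- Two words differ in exactly one position. -/
def WordStep {Alpha : Type} {n : ℕ} (W W' : Fin n → Alpha) : Prop :=
  ∃ p : Fin n, W p ≠ W' p ∧ ∀ q : Fin n, q ≠ p → W q = W' q

/-- `A'` is obtained from `A` by adding or removing exactly one element. -/
def SetStep {Alpha : Type} {n : ℕ} (A A' : Set (Fin n × Alpha)) : Prop :=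
  ∃ x, (x ∉ A ∧ A' = A ∪ {x}) ∨ (x ∈ A ∧ A' = A \ {x})

private lemma chain_to_rtg {α : Type*} (R : α → α → Prop) :
    ∀ (m : ℕ) (f : Fin (m + 1) → α),
      (∀ i : Fin m, R (f i.castSucc) (f i.succ)) →
      Relation.ReflTransGen R (f 0) (f (Fin.last m))
  | 0, f, _ => by rw [Fin.last_zero]
  | m + 1, f, hS => by
    have tail := chain_to_rtg R m (fun i => f i.succ) (fun i => by
      have := hS i.succ
      simpa [← Fin.succ_castSucc] using this)
    refine Relation.ReflTransGen.head (b := f (0 : Fin (m + 1)).succ) ?_ ?_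
    · have := hS 0
      simpa using this
    · simpa [Fin.succ_last] using tail

private lemma rtg_to_chain {α : Type*} (R : α → α → Prop) {a b : α}
    (h : Relation.ReflTransGen R a b) :
    ∃ (m : ℕ) (f : Fin (m + 1) → α), f 0 = a ∧ f (Fin.last m) = b ∧
      ∀ i : Fin m, R (f i.castSucc) (f i.succ) := by
  induction h with
  | refl => exact ⟨0, fun _ => a, rfl, rfl, fun i => i.elim0⟩
  | @tail b' c h1 h2 ih =>
    obtain ⟨m, f, h0, hl, hS⟩ := ih
    refine ⟨m + 1, Fin.snoc f c, ?_, ?_, ?_⟩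
    · rw [show (0 : Fin (m + 2)) = Fin.castSucc 0 by simp, Fin.snoc_castSucc]
      exact h0
    · rw [Fin.snoc_last]
    · intro i
      refine Fin.lastCases ?_ ?_ i
      · simpa [Fin.succ_last, Fin.snoc_castSucc, Fin.snoc_last, hl] using h2
      · intro j
        simpa only [Fin.succ_castSucc, Fin.snoc_castSucc] using hS j

private lemma chain_iff_rtg {α : Type*} (R : α → α → Prop) (P : α → Prop) (a b : α)
    (ha : P a) :
    (∃ (m : ℕ) (f : Fin (m + 1) → α), f 0 = a ∧ f (Fin.last m) = b ∧
        (∀ i, P (f i)) ∧ ∀ i : Fin m, R (f i.castSucc) (f i.succ)) ↔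
    Relation.ReflTransGen (fun x y => R x y ∧ P y) a b := by
  constructor
  · rintro ⟨m, f, rfl, rfl, hP, hS⟩
    exact chain_to_rtg _ m f (fun i => ⟨hS i, hP _⟩)
  · intro h
    obtain ⟨m, f, h0, hl, hS⟩ := rtg_to_chain _ h
    refine ⟨m, f, h0, hl, ?_, fun i => (hS i).1⟩
    intro i
    refine Fin.cases ?_ ?_ i
    · rw [h0]; exact ha
    · intro j; exact (hS j).2

private lemma rtg_prop {α : Type*} {R : α → α → Prop} {P : α → Prop} {a b : α}
    (h : Relation.ReflTransGen (fun x y => R x y ∧ P y) a b) (ha : P a) : P b := by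
  induction h with
  | refl => exact ha
  | tail _ h2 _ => exact h2.2

private lemma encoded_isHWord {Alpha : Type} {E : Set (Alpha × Alpha)} {n : ℕ}
    {A : Set (Fin n × Alpha)} {W : Fin n → Alpha} (hA : Consistent E A)
    (hW : ∀ q : Fin n, (q, W q) ∈ A) : IsHWord E W := by
  intro p h
  exact hA.2 p h _ _ (hW _) (hW _)

private lemma aof_consistent {Alpha : Type} (E : Set (Alpha × Alpha)) {n : ℕ}
    {W : Fin n → Alpha} (hW : IsHWord E W) : Consistent E (AOf W) := by
  refine ⟨fun p => ⟨W p, rfl⟩, ?_⟩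
  intro p h a b ha hb
  have ha' : a = W ⟨p, Nat.lt_of_succ_lt h⟩ := ha
  have hb' : b = W ⟨p + 1, h⟩ := hb
  rw [ha', hb']
  exact hW p h

private lemma word_step_sets {Alpha : Type} {E : Set (Alpha × Alpha)} {n : ℕ}
    {W W' : Fin n → Alpha} (hW : IsHWord E W) (hW' : IsHWord E W')
    (h : WordStep W W') :
    Relation.ReflTransGen (fun A A' => SetStep A A' ∧ Consistent E A')
      (AOf W) (AOf W') := by
  obtain ⟨p, hne, heq⟩ := h
  set B : Set (Fin n × Alpha) := AOf W ∪ {(p, W' p)} with hB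
  have key2 : ∀ {q' : Fin n} {c : Alpha}, (q', c) ∈ B → c = W q' ∨ c = W' q' := by
    rintro q' c (hc | hc)
    · exact Or.inl hc
    · simp only [Set.mem_singleton_iff, Prod.mk.injEq] at hc
      exact Or.inr (by rw [hc.2, hc.1])
  have hBc : Consistent E B := by
    refine ⟨fun q => ⟨W q, Or.inl rfl⟩, ?_⟩
    intro q hq a b ha hb
    rcases key2 ha with h1 | h1 <;> rcases key2 hb with h2 | h2 <;> rw [h1, h2]
    · exact hW q hq
    · by_cases hp : (⟨q + 1, hq⟩ : Fin n) = p
      · have hp' : (⟨q, Nat.lt_of_succ_lt hq⟩ : Fin n) ≠ p := by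
          rw [← hp]
          exact Fin.ne_of_val_ne (Nat.succ_ne_self q).symm
        rw [heq _ hp']
        exact hW' q hq
      · rw [← heq _ hp]
        exact hW q hq
    · by_cases hp : (⟨q, Nat.lt_of_succ_lt hq⟩ : Fin n) = p
      · have hp' : (⟨q + 1, hq⟩ : Fin n) ≠ p := by
          rw [← hp]
          exact Fin.ne_of_val_ne (Nat.succ_ne_self q)
        rw [heq _ hp']
        exact hW' q hq
      · rw [← heq _ hp]
        exact hW q hq
    · exact hW' q hq
  have step1 : SetStep (AOf W) B := by
    refine ⟨(p, W' p), Or.inl ⟨?_, rfl⟩⟩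
    intro hc
    exact hne (show W' p = W p from hc).symm
  have step2 : SetStep B (AOf W') := by
    refine ⟨(p, W p), Or.inr ⟨Or.inl rfl, ?_⟩⟩
    ext ⟨q, c⟩
    simp only [AOf, Set.mem_setOf_eq, Set.mem_diff, Set.mem_union,
      Set.mem_singleton_iff, Prod.mk.injEq, hB]
    by_cases hq : q = p
    · subst hq
      constructor
      · intro hc
        exact ⟨Or.inr ⟨rfl, hc⟩, fun h => hne (h.2.symm.trans hc)⟩
      · rintro ⟨h1 | ⟨_, h2⟩, h3⟩
        · exact absurd ⟨rfl, h1⟩ h3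
        · exact h2
    · constructor
      · intro hc
        exact ⟨Or.inl (by rw [hc, heq q hq]), fun h => hq h.1⟩
      · rintro ⟨h1 | ⟨h2, _⟩, _⟩
        · rw [h1, heq q hq]
        · exact absurd h2 hq
  exact Relation.ReflTransGen.head ⟨step1, hBc⟩
    (Relation.ReflTransGen.single ⟨step2, aof_consistent E hW'⟩)

private lemma rtg_set_to_word {Alpha : Type} {E : Set (Alpha × Alpha)} {n : ℕ}
    {Ws : Fin n → Alpha} {B : Set (Fin n × Alpha)}
    (h : Relation.ReflTransGen (fun A A' => SetStep A A' ∧ Consistent E A')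
      (AOf Ws) B) :
    ∃ W' : Fin n → Alpha, (∀ q, (q, W' q) ∈ B) ∧
      Relation.ReflTransGen (fun X Y => WordStep X Y ∧ IsHWord E Y) Ws W' := by
  induction h with
  | refl => exact ⟨Ws, fun q => rfl, Relation.ReflTransGen.refl⟩
  | tail h1 h2 ih =>
    obtain ⟨W', hmem, hrtg⟩ := ih
    obtain ⟨⟨x, hx⟩, hcons⟩ := h2
    rcases hx with ⟨hxn, rfl⟩ | ⟨hxm, rfl⟩
    · exact ⟨W', fun q => Or.inl (hmem q), hrtg⟩
    · by_cases hWx : (x.1, W' x.1) = x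
      · obtain ⟨c', hc'⟩ := hcons.1 x.1
        have hc'ne : c' ≠ W' x.1 := by
          intro hcc
          exact hc'.2 (by rw [hcc]; exact Set.mem_singleton_iff.mpr hWx)
        refine ⟨Function.update W' x.1 c', ?_, ?_⟩
        · intro q
          by_cases hq : q = x.1
          · subst hq
            simpa [Function.update_self] using hc'
          · rw [Function.update_of_ne hq]
            refine ⟨hmem q, ?_⟩
            simp only [Set.mem_singleton_iff]
            intro hcontra
            exact hq (by rw [← hcontra] at hWx ⊢)
        · refine hrtg.tail ⟨⟨x.1, ?_, fun q hq => (Function.update_of_ne hq _ _).symm⟩, ?_⟩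
          · rw [Function.update_self]
            exact fun hcc => hc'ne hcc.symm
          · refine encoded_isHWord hcons ?_
            intro q
            by_cases hq : q = x.1
            · subst hq
              simpa [Function.update_self] using hc'
            · rw [Function.update_of_ne hq]
              refine ⟨hmem q, ?_⟩
              simp only [Set.mem_singleton_iff]
              intro hcontra
              exact hq (by rw [← hcontra] at hWx ⊢)
      · refine ⟨W', ?_, hrtg⟩
        intro q
        refine ⟨hmem q, ?_⟩
        simp only [Set.mem_singleton_iff]
        intro hcontra
        by_cases hq : q = x.1
        · subst hq; exact hWx hcontra
        · exact hq (congrArg Prod.fst hcontra)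

theorem stmt6 {Alpha : Type} [Fintype Alpha] (E : Set (Alpha × Alpha)) (n : ℕ)
    (Ws Wg : Fin n → Alpha) (hWs : IsHWord E Ws) (hWg : IsHWord E Wg) :
    (∃ (m : ℕ) (Seq : Fin (m + 1) → Fin n → Alpha),
        Seq 0 = Ws ∧ Seq (Fin.last m) = Wg ∧ (∀ i, IsHWord E (Seq i)) ∧
        ∀ i : Fin m, WordStep (Seq i.castSucc) (Seq i.succ)) ↔
    (∃ (m : ℕ) (A : Fin (m + 1) → Set (Fin n × Alpha)),
        A 0 = AOf Ws ∧ A (Fin.last m) = AOf Wg ∧ (∀ i, Consistent E (A i)) ∧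
        ∀ i : Fin m, SetStep (A i.castSucc) (A i.succ)) := by
  rw [chain_iff_rtg WordStep (IsHWord E) Ws Wg hWs,
    chain_iff_rtg SetStep (Consistent E) (AOf Ws) (AOf Wg) (aof_consistent E hWs)]
  constructor
  · intro h
    induction h with
    | refl => exact Relation.ReflTransGen.refl
    | tail h1 h2 ih =>
      exact (ih (rtg_prop h1 hWs)).trans (word_step_sets (rtg_prop h1 hWs) h2.2 h2.1)
  · intro h
    obtain ⟨W', hmem, hrtg⟩ := rtg_set_to_word h
    have : W' = Wg := funext fun q => hmem q
    rw [← this]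
    exact hrtg
end

section
/- Let G be a simple graph on vertices {1,…,n} with maximum degree at most Δ and let k ≥ 1. If G contains a clique on k vertices, then in the clique constraint graph R(G,k) there exists a reconfiguration sequence starting at the initial configuration C_1 of length k + 3k(k−1)/2 + 1 in which each edge is reversed at most once and whose last step reverses the target edge t = {V,W}. -/
/-!
STATEMENT 8: Let G be a simple graph on vertices {1,…,n} with maximum degree
at most Δ and let k ≥ 1. If G contains a clique on k vertices, then in the
clique constraint graph R(G,k) there exists a reconfiguration sequence
starting at the initial configuration C_1 of length k + 3k(k−1)/2 + 1 in which
each edge is reversed at most once and whose last step reverses the target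
edge t = {V,W}.

Vertices of R(G,k) are encoded as `Fin n ⊕ ({e // e ∈ G.edgeFinset} ⊕ Fin 3)`:
`Sum.inl i` is `a_i`, `Sum.inr (Sum.inl e)` is `b_e`, and
`Sum.inr (Sum.inr 0)`, `Sum.inr (Sum.inr 1)`, `Sum.inr (Sum.inr 2)` are
`U`, `V`, `W` respectively.
-/

/-- A configuration of a constraint graph assigns to each edge one of its
two endpoints (its head). -/
def IsConf {V : Type} (G : SimpleGraph V) (C : Sym2 V → V) : Prop :=
  ∀ e ∈ G.edgeSet, C e ∈ e

/-- A configuration is legal if every vertex receives inflow (total weight of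
edges whose head is that vertex) at least its minimum inflow. -/
def Legal {V : Type} [Fintype V] [DecidableEq V] (G : SimpleGraph V)
    [DecidableRel G.Adj] (w : Sym2 V → ℕ) (μ : V → ℕ) (C : Sym2 V → V) : Prop :=
  ∀ v : V, μ v ≤ ∑ e ∈ G.edgeFinset, if C e = v then w e else 0

/-- Two configurations agree (as orientations of the edges of `G`). -/
def ConfEq {V : Type} (G : SimpleGraph V) (C C' : Sym2 V → V) : Prop :=
  ∀ e ∈ G.edgeSet, C e = C' e

/-- One reconfiguration step: exactly one edge changes its orientation. -/
def Step {V : Type} (G : SimpleGraph V) (C C' : Sym2 V → V) : Prop :=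
  ∃ e ∈ G.edgeSet, C e ≠ C' e ∧ ∀ f ∈ G.edgeSet, f ≠ e → C f = C' f

/-- A reconfiguration sequence: every configuration is a legal configuration
and each consecutive pair differs in the orientation of exactly one edge. -/
def IsReconfSeq {V : Type} [Fintype V] [DecidableEq V] (G : SimpleGraph V)
    [DecidableRel G.Adj] (w : Sym2 V → ℕ) (μ : V → ℕ) {m : ℕ}
    (Cs : Fin (m + 1) → Sym2 V → V) : Prop :=
  (∀ i, IsConf G (Cs i) ∧ Legal G w μ (Cs i)) ∧
    ∀ i : Fin m, Step G (Cs i.castSucc) (Cs i.succ)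

/-- In the sequence, each edge is reversed at most once. -/
def AtMostOnce {V : Type} (G : SimpleGraph V) {m : ℕ}
    (Cs : Fin (m + 1) → Sym2 V → V) : Prop :=
  ∀ e ∈ G.edgeSet, ∀ i j : Fin m,
    Cs i.castSucc e ≠ Cs i.succ e → Cs j.castSucc e ≠ Cs j.succ e → i = j

variable {n : ℕ}

/-- Vertices of the clique constraint graph `R(G,k)`. -/
abbrev RV (G : SimpleGraph (Fin n)) [DecidableRel G.Adj] : Type :=
  Fin n ⊕ ({e : Sym2 (Fin n) // e ∈ G.edgeFinset} ⊕ Fin 3)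

/-- Adjacency of `R(G,k)`: `a_i ~ b_e` iff `i ∈ e`; `U ~ a_i` for all `i`;
`b_e ~ V` for all `e`; and `V ~ W`. -/
def radjB (G : SimpleGraph (Fin n)) [DecidableRel G.Adj] :
    RV G → RV G → Bool
  | .inl i, .inr (.inl e) => decide (i ∈ (e : Sym2 (Fin n)))
  | .inr (.inl e), .inl i => decide (i ∈ (e : Sym2 (Fin n)))
  | .inl _, .inr (.inr u) => decide ((u : ℕ) = 0)
  | .inr (.inr u), .inl _ => decide ((u : ℕ) = 0)
  | .inr (.inl _), .inr (.inr u) => decide ((u : ℕ) = 1)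
  | .inr (.inr u), .inr (.inl _) => decide ((u : ℕ) = 1)
  | .inr (.inr u), .inr (.inr v) =>
      decide (((u : ℕ) = 1 ∧ (v : ℕ) = 2) ∨ ((u : ℕ) = 2 ∧ (v : ℕ) = 1))
  | _, _ => false

/-- The underlying graph of the clique constraint graph `R(G,k)`. -/
def RGraph (G : SimpleGraph (Fin n)) [DecidableRel G.Adj] : SimpleGraph (RV G) where
  Adj a b := radjB G a b
  symm := by
    constructor
    rintro (i | e | u) (j | f | v) h <;> simp_all [radjB] <;> omega
  loopless := by
    constructor
    rintro (i | e | u) h <;> simp_all [radjB] <;> omega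

instance (G : SimpleGraph (Fin n)) [DecidableRel G.Adj] :
    DecidableRel (RGraph G).Adj :=
  fun a b => inferInstanceAs (Decidable (radjB G a b = true))

/-- Edge weights of `R(G,k)`, as a symmetric pair function: `{a_i, b_e}` has
weight 1, `{U, a_i}` has weight `Δ`, `{b_e, V}` has weight 2, and the target
edge `{V, W}` has weight `k(k-1)`. -/
def wPairR (G : SimpleGraph (Fin n)) [DecidableRel G.Adj] (Δ k : ℕ) :
    RV G → RV G → ℕ
  | .inl _, .inr (.inl _) => 1
  | .inr (.inl _), .inl _ => 1
  | .inl _, .inr (.inr u) => if (u : ℕ) = 0 then Δ else 0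
  | .inr (.inr u), .inl _ => if (u : ℕ) = 0 then Δ else 0
  | .inr (.inl _), .inr (.inr u) => if (u : ℕ) = 1 then 2 else 0
  | .inr (.inr u), .inr (.inl _) => if (u : ℕ) = 1 then 2 else 0
  | .inr (.inr u), .inr (.inr v) =>
      if ((u : ℕ) = 1 ∧ (v : ℕ) = 2) ∨ ((u : ℕ) = 2 ∧ (v : ℕ) = 1)
      then k * (k - 1) else 0
  | _, _ => 0

/-- Edge weights of `R(G,k)`. -/
def wR (G : SimpleGraph (Fin n)) [DecidableRel G.Adj] (Δ k : ℕ) :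
    Sym2 (RV G) → ℕ :=
  Sym2.lift ⟨wPairR G Δ k, by
    rintro (i | e | u) (j | f | v) <;> (try rfl) <;>
      simp only [wPairR] <;> (exact if_congr (by tauto) rfl rfl)⟩

/-- Minimum inflows of `R(G,k)`: `μ(a_i) = deg_G(i)`, `μ(b_e) = 2`,
`μ(U) = (n-k)·Δ`, `μ(V) = k(k-1)`, `μ(W) = 0`. -/
def μR (G : SimpleGraph (Fin n)) [DecidableRel G.Adj] (Δ k : ℕ) : RV G → ℕ
  | .inl i => G.degree i
  | .inr (.inl _) => 2
  | .inr (.inr u) =>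
      if (u : ℕ) = 0 then (n - k) * Δ else if (u : ℕ) = 1 then k * (k - 1) else 0

/-- The head function of the initial configuration `C₁`: each `{a_i, b_e}` is
oriented toward `a_i`, each `{U, a_i}` toward `U`, each `{b_e, V}` toward
`b_e`, and `t = {V,W}` toward `V`. -/
def headR (G : SimpleGraph (Fin n)) [DecidableRel G.Adj] : RV G → RV G → RV G
  | .inl i, .inr (.inl _) => .inl i
  | .inr (.inl _), .inl i => .inl i
  | .inl _, .inr (.inr u) => .inr (.inr u)
  | .inr (.inr u), .inl _ => .inr (.inr u)
  | .inr (.inl e), .inr (.inr _) => .inr (.inl e)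
  | .inr (.inr _), .inr (.inl e) => .inr (.inl e)
  | .inr (.inr _), .inr (.inr _) => .inr (.inr 1)
  | _, _ => .inr (.inr 0)

/-- The initial configuration `C₁` of `R(G,k)`. -/
def CR (G : SimpleGraph (Fin n)) [DecidableRel G.Adj] : Sym2 (RV G) → RV G :=
  Sym2.lift ⟨headR G, by rintro (i | e | u) (j | f | v) <;> rfl⟩

/-- The target edge `t = {V, W}`. -/
def tEdge (G : SimpleGraph (Fin n)) [DecidableRel G.Adj] : Sym2 (RV G) :=
  s((.inr (.inr 1) : RV G), (.inr (.inr 2) : RV G))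

namespace Stmt8

variable {n : ℕ}

/-- min of the two endpoints. -/
def einf (e : Sym2 (Fin n)) : Fin n :=
  Sym2.lift ⟨fun a b => min a b, fun a b => min_comm a b⟩ e

/-- max of the two endpoints. -/
def esup (e : Sym2 (Fin n)) : Fin n :=
  Sym2.lift ⟨fun a b => max a b, fun a b => max_comm a b⟩ e

lemma eq_mk_einf_esup (e : Sym2 (Fin n)) : e = s(einf e, esup e) := by
  induction e using Sym2.ind with
  | _ a b =>
    simp only [einf, esup, Sym2.lift_mk]
    rcases le_total a b with h | h
    · rw [min_eq_left h, max_eq_right h]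
    · rw [min_eq_right h, max_eq_left h, Sym2.eq_swap]

lemma mem_iff_inf_sup {i : Fin n} {e : Sym2 (Fin n)} : i ∈ e ↔ i = einf e ∨ i = esup e := by
  conv_lhs => rw [eq_mk_einf_esup e]
  simp [Sym2.mem_iff]

lemma einf_ne_esup {e : Sym2 (Fin n)} (h : ¬ e.IsDiag) : einf e ≠ esup e := by
  intro hh
  apply h
  rw [eq_mk_einf_esup e, hh]
  exact Sym2.mk_isDiag_iff.2 rfl

/-- whether the edge {a_i, b_e} has been flipped toward b_e. -/
def flipA (hf : Sym2 (Fin n) → ℕ) (e : Sym2 (Fin n)) (i : Fin n) : Prop :=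
  (i = einf e ∧ 1 ≤ hf e) ∨ (i = esup e ∧ 2 ≤ hf e)

instance (hf : Sym2 (Fin n) → ℕ) (e : Sym2 (Fin n)) (i : Fin n) :
    Decidable (flipA hf e i) := by unfold flipA; infer_instance

variable (G : SimpleGraph (Fin n)) [DecidableRel G.Adj]

/-- head function of the parameterized configuration. -/
def headC (hA : Fin n → Bool) (hf : Sym2 (Fin n) → ℕ) (tb : Bool) : RV G → RV G → RV G
  | .inl i, .inr (.inl e) => if flipA hf e.1 i then .inr (.inl e) else .inl i
  | .inr (.inl e), .inl i => if flipA hf e.1 i then .inr (.inl e) else .inl i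
  | .inl i, .inr (.inr u) => if hA i ∧ (u : ℕ) = 0 then .inl i else .inr (.inr u)
  | .inr (.inr u), .inl i => if hA i ∧ (u : ℕ) = 0 then .inl i else .inr (.inr u)
  | .inr (.inl e), .inr (.inr u) =>
      if 3 ≤ hf e.1 ∧ (u : ℕ) = 1 then .inr (.inr u) else .inr (.inl e)
  | .inr (.inr u), .inr (.inl e) =>
      if 3 ≤ hf e.1 ∧ (u : ℕ) = 1 then .inr (.inr u) else .inr (.inl e)
  | .inr (.inr _), .inr (.inr _) => if tb then .inr (.inr 2) else .inr (.inr 1)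
  | _, _ => .inr (.inr 0)

/-- the parameterized configuration. -/
def CfgC (hA : Fin n → Bool) (hf : Sym2 (Fin n) → ℕ) (tb : Bool) : Sym2 (RV G) → RV G :=
  Sym2.lift ⟨headC G hA hf tb, by
    rintro (i | e | u) (j | f | v) <;> rfl⟩

@[simp] lemma CfgC_mk (hA hf tb) (x y : RV G) :
    CfgC G hA hf tb s(x, y) = headC G hA hf tb x y := rfl

/-- the edge-head counter at time `i`, given the list `l₂` of clique edges. -/
def hfSt (l₂ : List (Sym2 (Fin n))) (k i : ℕ) : Sym2 (Fin n) → ℕ := fun e =>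
  if e ∈ l₂ then min 3 (i - k - 3 * l₂.idxOf e) else 0

/-- The configuration after `i` steps. -/
def stCs (l₁ : List (Fin n)) (l₂ : List (Sym2 (Fin n))) (k m i : ℕ) :
    Sym2 (RV G) → RV G :=
  CfgC G (fun v => decide (v ∈ l₁.take i)) (hfSt l₂ k i) (decide (m ≤ i))

end Stmt8
namespace Stmt8

variable {n : ℕ} (G : SimpleGraph (Fin n)) [DecidableRel G.Adj]

lemma adj_iff {x y : RV G} : (RGraph G).Adj x y ↔ radjB G x y = true := Iff.rfl

lemma isConf_CfgC (hA hf tb) : IsConf (RGraph G) (CfgC G hA hf tb) := by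
  intro e he
  induction e using Sym2.ind with
  | _ x y =>
    rw [SimpleGraph.mem_edgeSet, adj_iff] at he
    rcases x with i | e | u <;> rcases y with j | f | v <;>
      simp_all [radjB, CfgC_mk, headC] <;>
      (try split_ifs) <;>
      (try simp_all [Sym2.mem_iff]) <;>
      first | exact em _ | exact (em _).symm | omega

-- generic inflow lemmas
lemma inflow_lower {V : Type} [Fintype V] [DecidableEq V] (G : SimpleGraph V)
    [DecidableRel G.Adj] (w : Sym2 V → ℕ) (C : Sym2 V → V) (v : V)
    (T : Finset (Sym2 V)) (hT : T ⊆ G.edgeFinset) (hv : ∀ f ∈ T, C f = v) :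
    ∑ f ∈ T, w f ≤ ∑ e ∈ G.edgeFinset, if C e = v then w e else 0 := by
  calc ∑ f ∈ T, w f = ∑ f ∈ T, if C f = v then w f else 0 :=
        Finset.sum_congr rfl fun f hf => by rw [if_pos (hv f hf)]
    _ ≤ _ := Finset.sum_le_sum_of_subset hT

lemma inflow_mono {V : Type} [Fintype V] [DecidableEq V] (G : SimpleGraph V)
    [DecidableRel G.Adj] (w : Sym2 V → ℕ) (C C' : Sym2 V → V) (e : Sym2 V)
    (hdiff : ∀ f ∈ G.edgeSet, f ≠ e → C f = C' f) (v : V) (hv : C e ≠ v) :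
    (∑ f ∈ G.edgeFinset, if C f = v then w f else 0) ≤
      ∑ f ∈ G.edgeFinset, if C' f = v then w f else 0 := by
  refine Finset.sum_le_sum fun f hf => ?_
  by_cases h : f = e
  · subst h; rw [if_neg hv]; exact Nat.zero_le _
  · rw [hdiff f (SimpleGraph.mem_edgeFinset.1 hf) h]

end Stmt8
namespace Stmt8

variable {n : ℕ} (G : SimpleGraph (Fin n)) [DecidableRel G.Adj]

/-- the edge reversed at step `i`. -/
def mv (l₁ : List (Fin n)) (l₂' : List {e : Sym2 (Fin n) // e ∈ G.edgeFinset})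
    (k M : ℕ) (i : ℕ) : Sym2 (RV G) :=
  if i < k then
    (l₁[i]?.elim (tEdge G) fun v => s(.inl v, .inr (.inr 0)))
  else if i < k + 3 * M then
    (l₂'[(i - k) / 3]?.elim (tEdge G) fun e =>
      if (i - k) % 3 = 0 then s(.inl (einf e.1), .inr (.inl e))
      else if (i - k) % 3 = 1 then s(.inl (esup e.1), .inr (.inl e))
      else s(.inr (.inl e), .inr (.inr 1)))
  else tEdge G

lemma mem_take_succ_iff {α : Type*} {l : List α} {i : ℕ} (h : i < l.length) {v : α} :
    v ∈ l.take (i + 1) ↔ v ∈ l.take i ∨ v = l[i] := by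
  rw [List.take_succ, List.getElem?_eq_getElem h, List.mem_append]
  simp

lemma not_mem_take_self {α : Type*} {l : List α} (hn : l.Nodup) {i : ℕ}
    (h : i < l.length) : l[i] ∉ l.take i := by
  intro hmem
  obtain ⟨j, hj, hje⟩ := List.mem_iff_getElem.1 hmem
  have hj' : j < i := by
    have := hj
    simp [List.length_take] at this
    omega
  rw [List.getElem_take] at hje
  exact absurd (hn.getElem_inj_iff.1 hje) (by omega)

end Stmt8
namespace Stmt8

variable {n : ℕ} (G : SimpleGraph (Fin n)) [DecidableRel G.Adj]

@[simp] lemma stCs_mk (l₁ : List (Fin n)) (l₂ : List (Sym2 (Fin n))) (k m i : ℕ)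
    (x y : RV G) :
    stCs G l₁ l₂ k m i s(x, y) =
      headC G (fun v => decide (v ∈ l₁.take i)) (hfSt l₂ k i) (decide (m ≤ i)) x y := rfl

lemma wR_ab (Δ k : ℕ) (i : Fin n) (e : {e : Sym2 (Fin n) // e ∈ G.edgeFinset}) :
    wR G Δ k s(.inl i, .inr (.inl e)) = 1 := rfl

lemma wR_aU (Δ k : ℕ) (i : Fin n) :
    wR G Δ k s(.inl i, .inr (.inr 0)) = Δ := rfl

lemma wR_bV (Δ k : ℕ) (e : {e : Sym2 (Fin n) // e ∈ G.edgeFinset}) :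
    wR G Δ k s(.inr (.inl e), .inr (.inr 1)) = 2 := rfl

lemma wR_t (Δ k : ℕ) : wR G Δ k (tEdge G) = k * (k - 1) := rfl

end Stmt8
set_option maxHeartbeats 2000000 in
open Stmt8 in
theorem stmt8 (n Δ k : ℕ) (G : SimpleGraph (Fin n)) [DecidableRel G.Adj]
    (hΔ : ∀ i, G.degree i ≤ Δ) (hk : 1 ≤ k)
    (hclique : ∃ S : Finset (Fin n), G.IsNClique k S) :
    ∃ Cs : Fin (k + 3 * (k * (k - 1)) / 2 + 1 + 1) → Sym2 (RV G) → RV G,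
      ConfEq (RGraph G) (Cs 0) (CR G) ∧
      IsReconfSeq (RGraph G) (wR G Δ k) (μR G Δ k) Cs ∧
      AtMostOnce (RGraph G) Cs ∧
      Cs (Fin.castSucc (Fin.last (k + 3 * (k * (k - 1)) / 2 + 1 - 1))) (tEdge G) ≠
        Cs (Fin.last (k + 3 * (k * (k - 1)) / 2 + 1)) (tEdge G) := by
  classical
  obtain ⟨S, hS⟩ := hclique
  have hkS : S.card = k := hS.2
  have hclq : G.IsClique S := hS.1
  set ES : Finset (Sym2 (Fin n)) := S.sym2.filter (fun e => ¬ e.IsDiag) with hESdef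
  have hedgeES : ∀ e ∈ ES, e ∈ G.edgeFinset := by
    intro e he
    induction e using Sym2.ind with
    | _ a b =>
      rw [hESdef, Finset.mem_filter, Finset.mk_mem_sym2_iff] at he
      rw [SimpleGraph.mem_edgeFinset, SimpleGraph.mem_edgeSet]
      exact hclq he.1.1 he.1.2 (by simpa using he.2)
  set M : ℕ := ES.card with hMdef
  have hn : k ≤ n := by
    have := Finset.card_le_univ S
    simpa [hkS] using this
  have hΔk : ∀ v ∈ S, k - 1 ≤ Δ := by
    intro v hv
    have hsub : S.erase v ⊆ G.neighborFinset v := by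
      intro u hu
      rw [SimpleGraph.mem_neighborFinset]
      exact (hclq hv (Finset.mem_of_mem_erase hu) (Ne.symm (Finset.ne_of_mem_erase hu)))
    calc k - 1 = (S.erase v).card := by rw [Finset.card_erase_of_mem hv, hkS]
      _ ≤ (G.neighborFinset v).card := Finset.card_le_card hsub
      _ ≤ Δ := by rw [SimpleGraph.card_neighborFinset_eq_degree]; exact hΔ v
  have h2M : 2 * M = k * (k - 1) := by
    rw [hMdef, hESdef]
    have hdiag : S.sym2.filter (fun e => e.IsDiag) = S.image Sym2.diag := by
      ext e
      induction e using Sym2.ind with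
      | _ a b =>
        simp only [Finset.mem_filter, Finset.mk_mem_sym2_iff, Sym2.mk_isDiag_iff,
          Finset.mem_image]
        constructor
        · rintro ⟨⟨ha, _⟩, rfl⟩
          exact ⟨a, ha, rfl⟩
        · rintro ⟨x, hx, hxe⟩
          have hax : a = x ∧ b = x := by
            have h' := hxe.symm
            rw [Sym2.diag, Sym2.eq_iff] at h'
            tauto
          obtain ⟨rfl, rfl⟩ := hax
          exact ⟨⟨hx, hx⟩, rfl⟩
    have hcards : (S.sym2.filter (fun e => ¬ e.IsDiag)).card + k = S.sym2.card := by
      rw [← Finset.card_filter_add_card_filter_not (s := S.sym2)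
        (p := fun e => e.IsDiag)]
      rw [hdiag, Finset.card_image_of_injective _ Sym2.diag_injective, hkS]
      omega
    have hsym2 : S.sym2.card = (k + 1) * k / 2 := by
      rw [Finset.card_sym2, hkS, Nat.choose_two_right]
      simp
    rcases k with _ | k'
    · simp_all
    have heven : 2 * ((k' + 2) * (k' + 1) / 2) = (k' + 2) * (k' + 1) := by
      refine Nat.two_mul_div_two_of_even ?_
      have he := Nat.even_mul_succ_self (k' + 1)
      rwa [Nat.mul_comm] at he
    have h5 : (k' + 2) * (k' + 1) = (k' + 1) * k' + 2 * (k' + 1) := by ring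
    have h6 : k' + 1 + 1 = k' + 2 := rfl
    rw [h6] at hsym2
    rw [Nat.add_sub_cancel]
    omega
  have hinfS : ∀ e ∈ ES, einf e ∈ S ∧ esup e ∈ S ∧ einf e ≠ esup e := by
    intro e he
    rw [hESdef, Finset.mem_filter] at he
    have h1 : einf e ∈ e := mem_iff_inf_sup.2 (Or.inl rfl)
    have h2 : esup e ∈ e := mem_iff_inf_sup.2 (Or.inr rfl)
    exact ⟨Finset.mem_sym2_iff.1 he.1 _ h1, Finset.mem_sym2_iff.1 he.1 _ h2,
      einf_ne_esup he.2⟩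
  set l₁ : List (Fin n) := S.toList with hl₁def
  set l₂ : List (Sym2 (Fin n)) := ES.toList with hl₂def
  have hl₁len : l₁.length = k := by rw [hl₁def, Finset.length_toList, hkS]
  have hl₁nd : l₁.Nodup := Finset.nodup_toList S
  have hl₂len : l₂.length = M := by rw [hl₂def, Finset.length_toList]
  have hl₂nd : l₂.Nodup := Finset.nodup_toList ES
  have hSl₁ : ∀ v, v ∈ l₁ ↔ v ∈ S := fun v => Finset.mem_toList
  have hESl₂ : ∀ e, e ∈ l₂ ↔ e ∈ ES := fun e => Finset.mem_toList
  have hmem : ∀ e ∈ l₂, e ∈ G.edgeFinset := fun e he => hedgeES e ((hESl₂ e).1 he)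
  set l₂' : List {e : Sym2 (Fin n) // e ∈ G.edgeFinset} :=
    l₂.attach.map (fun x => ⟨x.1, hmem x.1 x.2⟩) with hl₂'def
  have hl₂'len : l₂'.length = M := by
    rw [hl₂'def, List.length_map, List.length_attach, hl₂len]
  have hl₂'get : ∀ q (hq : q < M), (l₂'[q]'(by rwa [hl₂'len])).1 = l₂[q]'(by rwa [hl₂len]) := by
    intro q hq
    simp [hl₂'def]
  set nm : ℕ := k + 3 * M + 1 with hnmdef
  have hfq : ∀ q (hq : q < M) i, hfSt l₂ k i (l₂[q]'(by rwa [hl₂len])) =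
      min 3 (i - k - 3 * q) := by
    intro q hq i
    have hql : q < l₂.length := by rwa [hl₂len]
    rw [hfSt, if_pos (List.getElem_mem hql), hl₂nd.idxOf_getElem q hql]
  have hfnot : ∀ i e, e ∉ l₂ → hfSt l₂ k i e = 0 := by
    intro i e he; rw [hfSt, if_neg he]
  have hfpos : ∀ i e, 1 ≤ hfSt l₂ k i e → e ∈ l₂ := by
    intro i e h
    by_contra hc
    rw [hfnot i e hc] at h
    omega
  have hcase : ∀ i, i < nm → i < k ∨ (∃ q r, q < M ∧ r < 3 ∧ i = k + 3 * q + r) ∨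
      i = k + 3 * M := by
    intro i hi
    rw [hnmdef] at hi
    by_cases h1 : i < k
    · exact Or.inl h1
    by_cases h2 : i < k + 3 * M
    · exact Or.inr (Or.inl ⟨(i - k) / 3, (i - k) % 3, by omega, by omega, by omega⟩)
    · exact Or.inr (Or.inr (by omega))
  have hmv1 : ∀ i (h : i < k), mv G l₁ l₂' k M i =
      s(.inl (l₁[i]'(by rwa [hl₁len])), .inr (.inr 0)) := by
    intro i h
    rw [mv, if_pos h, List.getElem?_eq_getElem (by rwa [hl₁len])]
    rfl
  have hmv2 : ∀ q r (hq : q < M) (hr : r < 3), mv G l₁ l₂' k M (k + 3 * q + r) =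
      (if r = 0 then s(.inl (einf (l₂'[q]'(by rwa [hl₂'len])).1), .inr (.inl (l₂'[q]'(by rwa [hl₂'len]))))
       else if r = 1 then s(.inl (esup (l₂'[q]'(by rwa [hl₂'len])).1), .inr (.inl (l₂'[q]'(by rwa [hl₂'len]))))
       else s(.inr (.inl (l₂'[q]'(by rwa [hl₂'len]))), .inr (.inr 1))) := by
    intro q r hq hr
    have hd : (k + 3 * q + r - k) / 3 = q := by omega
    have hm3 : (k + 3 * q + r - k) % 3 = r := by omega
    rw [mv, if_neg (by omega), if_pos (by omega), hd, hm3,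
      List.getElem?_eq_getElem (by rwa [hl₂'len])]
    rfl
  have hmv3 : mv G l₁ l₂' k M (k + 3 * M) = tEdge G := by
    rw [mv, if_neg (by omega), if_neg (by omega)]
  -- hf doesn't change during stage 1
  have hfstage1 : ∀ i, i + 1 ≤ k → hfSt l₂ k i = hfSt l₂ k (i + 1) := by
    intro i hik
    funext e
    rw [hfSt, hfSt]
    split
    · omega
    · rfl
  -- hf step in stage 2
  have hfstage2 : ∀ q r (hq : q < M) (hr : r < 3), ∀ e,
      (e ≠ l₂[q]'(by rwa [hl₂len]) →
        hfSt l₂ k (k + 3 * q + r) e = hfSt l₂ k (k + 3 * q + r + 1) e) ∧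
      (e = l₂[q]'(by rwa [hl₂len]) →
        hfSt l₂ k (k + 3 * q + r) e = r ∧ hfSt l₂ k (k + 3 * q + r + 1) e = r + 1) := by
    intro q r hq hr e
    constructor
    · intro hne
      by_cases hmem' : e ∈ l₂
      · have hidx : l₂.idxOf e < l₂.length := List.idxOf_lt_length_iff.2 hmem'
        have hidxne : l₂.idxOf e ≠ q := by
          intro hc
          apply hne
          subst hc
          exact (List.getElem_idxOf hidx).symm
        rw [hfSt, hfSt, if_pos hmem', if_pos hmem']
        have : l₂.idxOf e < M := by rwa [hl₂len] at hidx
        omega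
      · rw [hfnot _ _ hmem', hfnot _ _ hmem']
    · intro he
      subst he
      rw [hfq q hq, hfq q hq]
      omega
  -- hf doesn't change at the last step
  have hfstage3 : hfSt l₂ k (k + 3 * M) = hfSt l₂ k (k + 3 * M + 1) := by
    funext e
    by_cases hmem' : e ∈ l₂
    · have hidx : l₂.idxOf e < l₂.length := List.idxOf_lt_length_iff.2 hmem'
      rw [hfSt, hfSt, if_pos hmem', if_pos hmem']
      have : l₂.idxOf e < M := by rwa [hl₂len] at hidx
      omega
    · rw [hfnot _ _ hmem', hfnot _ _ hmem']
  -- hf is saturated at the end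
  have hfsat : ∀ q (hq : q < M), ∀ i, k + 3 * M ≤ i →
      hfSt l₂ k i (l₂[q]'(by rwa [hl₂len])) = 3 := by
    intro q hq i hi
    rw [hfq q hq]
    omega
  -- hA doesn't change during stages 2-3
  have hAstage23 : ∀ i, k ≤ i → l₁.take i = l₁ := by
    intro i hi
    exact List.take_of_length_le (by omega)
  have hAiff1 : ∀ i (hik : i < k), ∀ w : Fin n, w ≠ l₁[i]'(by rwa [hl₁len]) →
      ((w ∈ l₁.take i) ↔ (w ∈ l₁.take (i + 1))) := by
    intro i hik w hw
    rw [mem_take_succ_iff (by rwa [hl₁len])]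
    constructor
    · exact Or.inl
    · rintro (h | h)
      · exact h
      · exact absurd h hw
  have stage1diff : ∀ i (hik : i < k), ∀ f ∈ (RGraph G).edgeSet,
      f ≠ mv G l₁ l₂' k M i →
      stCs G l₁ l₂ k nm i f = stCs G l₁ l₂ k nm (i + 1) f := by
    intro i hik f hfe hne
    rw [hmv1 i hik] at hne
    have h1 : (decide (nm ≤ i)) = false := decide_eq_false (by omega)
    have h2 : (decide (nm ≤ i + 1)) = false := decide_eq_false (by omega)
    have hfe' := hfstage1 i hik
    induction f using Sym2.ind with
    | _ x y =>
      cases x with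
      | inl w =>
        cases y with
        | inl w' => rfl
        | inr z =>
          cases z with
          | inl e' => rw [stCs_mk, stCs_mk]; simp only [headC, hfe']
          | inr u' =>
            rw [stCs_mk, stCs_mk]
            simp only [headC]
            by_cases hw : w = l₁[i]'(by rwa [hl₁len])
            · subst hw
              have hu : ¬ ((u' : ℕ) = 0) := by
                intro hu
                apply hne
                have hu0 : u' = (0 : Fin 3) := Fin.ext (by simpa using hu)
                rw [hu0]
              rw [if_neg (by tauto), if_neg (by tauto)]
            · simp only [decide_eq_true_eq]
              exact if_congr (and_congr_left' (hAiff1 i hik w hw)) rfl rfl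
      | inr z =>
        cases z with
        | inl e =>
          cases y with
          | inl w' => rw [stCs_mk, stCs_mk]; simp only [headC, hfe']
          | inr z' =>
            cases z' with
            | inl e' => rfl
            | inr u' => rw [stCs_mk, stCs_mk]; simp only [headC, hfe']
        | inr u =>
          cases y with
          | inl w' =>
            rw [stCs_mk, stCs_mk]
            simp only [headC]
            by_cases hw : w' = l₁[i]'(by rwa [hl₁len])
            · subst hw
              have hu : ¬ ((u : ℕ) = 0) := by
                intro hu
                apply hne
                have hu0 : u = (0 : Fin 3) := Fin.ext (by simpa using hu)
                rw [hu0]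
                exact Sym2.eq_swap
              rw [if_neg (by tauto), if_neg (by tauto)]
            · simp only [decide_eq_true_eq]
              exact if_congr (and_congr_left' (hAiff1 i hik w' hw)) rfl rfl
          | inr z' =>
            cases z' with
            | inl e' => rw [stCs_mk, stCs_mk]; simp only [headC, hfe']
            | inr u' => rw [stCs_mk, stCs_mk]; simp [headC, h1, h2]
  have stage2diff : ∀ q r (hq : q < M) (hr : r < 3), ∀ f ∈ (RGraph G).edgeSet,
      f ≠ mv G l₁ l₂' k M (k + 3 * q + r) →
      stCs G l₁ l₂ k nm (k + 3 * q + r) f = stCs G l₁ l₂ k nm (k + 3 * q + r + 1) f := by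
    intro q r hq hr f hfe hne
    have h1 : (decide (nm ≤ k + 3 * q + r)) = false := decide_eq_false (by omega)
    have h2 : (decide (nm ≤ k + 3 * q + r + 1)) = false := decide_eq_false (by omega)
    have hA1 : l₁.take (k + 3 * q + r) = l₁ := hAstage23 _ (by omega)
    have hA2 : l₁.take (k + 3 * q + r + 1) = l₁ := hAstage23 _ (by omega)
    have he0mem : (l₂[q]'(by rwa [hl₂len])) ∈ ES :=
      (hESl₂ _).1 (List.getElem_mem _)
    obtain ⟨hinf0, hsup0, hne0⟩ := hinfS _ he0mem
    have hq1 : (l₂'[q]'(by rwa [hl₂'len])).1 = l₂[q]'(by rwa [hl₂len]) := hl₂'get q hq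
    rw [hmv2 q r hq hr] at hne
    induction f using Sym2.ind with
    | _ x y =>
      cases x with
      | inl w =>
        cases y with
        | inl w' => rfl
        | inr z =>
          cases z with
          | inl e' =>
            rw [stCs_mk, stCs_mk]
            simp only [headC]
            by_cases hee : e'.1 = l₂[q]'(by rwa [hl₂len])
            · have hwe : w ∈ e'.1 := by
                rw [SimpleGraph.mem_edgeSet, adj_iff] at hfe
                simpa [radjB] using hfe
              have hv := (hfstage2 q r hq hr e'.1).2 hee
              have hsub : e' = l₂'[q]'(by rwa [hl₂'len]) :=
                Subtype.ext (by rw [hee, hq1])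
              rw [← hsub] at hne
              have hw2 : w = einf e'.1 ∨ w = esup e'.1 := mem_iff_inf_sup.1 hwe
              have hne0' : einf e'.1 ≠ esup e'.1 := by rw [hee]; exact hne0
              interval_cases r
              · rw [if_pos rfl] at hne
                simp only [Nat.add_zero, Nat.zero_add] at hv
                have hwne : w ≠ einf e'.1 := fun hc => hne (by rw [hc])
                exact if_congr (by simp [flipA, hv.1, hv.2, hwne]) rfl rfl
              · rw [if_neg (by norm_num), if_pos rfl] at hne
                have hwne : w ≠ esup e'.1 := fun hc => hne (by rw [hc])
                exact if_congr (by simp [flipA, hv.1, hv.2, hwne]) rfl rfl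
              · exact if_congr (by simp [flipA, hv.1, hv.2]) rfl rfl
            · exact if_congr (by simp [flipA, (hfstage2 q r hq hr e'.1).1 hee]) rfl rfl
          | inr u' =>
            rw [stCs_mk, stCs_mk]
            simp only [headC, hA1, hA2]
      | inr z =>
        cases z with
        | inl e =>
          cases y with
          | inl w' =>
            rw [stCs_mk, stCs_mk]
            simp only [headC]
            by_cases hee : e.1 = l₂[q]'(by rwa [hl₂len])
            · have hwe : w' ∈ e.1 := by
                rw [SimpleGraph.mem_edgeSet, adj_iff] at hfe
                simpa [radjB] using hfe
              have hv := (hfstage2 q r hq hr e.1).2 hee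
              have hsub : e = l₂'[q]'(by rwa [hl₂'len]) :=
                Subtype.ext (by rw [hee, hq1])
              rw [← hsub] at hne
              have hw2 : w' = einf e.1 ∨ w' = esup e.1 := mem_iff_inf_sup.1 hwe
              have hne0' : einf e.1 ≠ esup e.1 := by rw [hee]; exact hne0
              interval_cases r
              · rw [if_pos rfl] at hne
                simp only [Nat.add_zero, Nat.zero_add] at hv
                have hwne : w' ≠ einf e.1 := fun hc => hne (by rw [hc]; exact Sym2.eq_swap)
                exact if_congr (by simp [flipA, hv.1, hv.2, hwne]) rfl rfl
              · rw [if_neg (by norm_num), if_pos rfl] at hne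
                have hwne : w' ≠ esup e.1 := fun hc => hne (by rw [hc]; exact Sym2.eq_swap)
                exact if_congr (by simp [flipA, hv.1, hv.2, hwne]) rfl rfl
              · exact if_congr (by simp [flipA, hv.1, hv.2]) rfl rfl
            · exact if_congr (by simp [flipA, (hfstage2 q r hq hr e.1).1 hee]) rfl rfl
          | inr z' =>
            cases z' with
            | inl e' => rfl
            | inr u' =>
              rw [stCs_mk, stCs_mk]
              simp only [headC]
              by_cases hee : e.1 = l₂[q]'(by rwa [hl₂len])
              · have hv := (hfstage2 q r hq hr e.1).2 hee
                have hsub : e = l₂'[q]'(by rwa [hl₂'len]) :=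
                  Subtype.ext (by rw [hee, hq1])
                rw [← hsub] at hne
                interval_cases r
                · refine if_congr ?_ rfl rfl
                  simp only [Nat.add_zero, Nat.zero_add] at hv
                  simp [hv.1, hv.2]
                · exact if_congr (by simp [hv.1, hv.2]) rfl rfl
                · rw [if_neg (by norm_num), if_neg (by norm_num)] at hne
                  have hu' : ¬ ((u' : ℕ) = 1) := by
                    intro hc
                    apply hne
                    have : u' = (1 : Fin 3) := Fin.ext (by simpa using hc)
                    rw [this]
                  exact if_congr (by simp [hv.1, hv.2, hu']) rfl rfl
              · exact if_congr (by simp [(hfstage2 q r hq hr e.1).1 hee]) rfl rfl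
        | inr u =>
          cases y with
          | inl w' =>
            rw [stCs_mk, stCs_mk]
            simp only [headC, hA1, hA2]
          | inr z' =>
            cases z' with
            | inl e' =>
              rw [stCs_mk, stCs_mk]
              simp only [headC]
              by_cases hee : e'.1 = l₂[q]'(by rwa [hl₂len])
              · have hv := (hfstage2 q r hq hr e'.1).2 hee
                have hsub : e' = l₂'[q]'(by rwa [hl₂'len]) :=
                  Subtype.ext (by rw [hee, hq1])
                rw [← hsub] at hne
                interval_cases r
                · refine if_congr ?_ rfl rfl
                  simp only [Nat.add_zero, Nat.zero_add] at hv
                  simp [hv.1, hv.2]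
                · exact if_congr (by simp [hv.1, hv.2]) rfl rfl
                · rw [if_neg (by norm_num), if_neg (by norm_num)] at hne
                  have hu' : ¬ ((u : ℕ) = 1) := by
                    intro hc
                    apply hne
                    have : u = (1 : Fin 3) := Fin.ext (by simpa using hc)
                    rw [this]
                    exact Sym2.eq_swap
                  exact if_congr (by simp [hv.1, hv.2, hu']) rfl rfl
              · exact if_congr (by simp [(hfstage2 q r hq hr e'.1).1 hee]) rfl rfl
            | inr u' =>
              rw [stCs_mk, stCs_mk]
              simp [headC, h1, h2]
  have stage3diff : ∀ f ∈ (RGraph G).edgeSet, f ≠ tEdge G →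
      stCs G l₁ l₂ k nm (k + 3 * M) f = stCs G l₁ l₂ k nm (k + 3 * M + 1) f := by
    intro f hfe hne
    induction f using Sym2.ind with
    | _ x y =>
      cases x with
      | inl w =>
        cases y with
        | inl w' => rfl
        | inr z =>
          cases z with
          | inl e' => rw [stCs_mk, stCs_mk]; simp only [headC, hfstage3]
          | inr u' =>
            rw [stCs_mk, stCs_mk]
            simp only [headC, hAstage23 (k + 3 * M) (by omega),
              hAstage23 (k + 3 * M + 1) (by omega)]
      | inr z =>
        cases z with
        | inl e =>
          cases y with
          | inl w' => rw [stCs_mk, stCs_mk]; simp only [headC, hfstage3]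
          | inr z' =>
            cases z' with
            | inl e' => rfl
            | inr u' => rw [stCs_mk, stCs_mk]; simp only [headC, hfstage3]
        | inr u =>
          cases y with
          | inl w' =>
            rw [stCs_mk, stCs_mk]
            simp only [headC, hAstage23 (k + 3 * M) (by omega),
              hAstage23 (k + 3 * M + 1) (by omega)]
          | inr z' =>
            cases z' with
            | inl e' => rw [stCs_mk, stCs_mk]; simp only [headC, hfstage3]
            | inr u' =>
              exfalso
              apply hne
              rw [SimpleGraph.mem_edgeSet, adj_iff] at hfe
              have hu : ((u : ℕ) = 1 ∧ (u' : ℕ) = 2) ∨ ((u : ℕ) = 2 ∧ (u' : ℕ) = 1) := by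
                simpa [radjB] using hfe
              rcases hu with ⟨h1, h2⟩ | ⟨h1, h2⟩
              · have : u = (1 : Fin 3) := Fin.ext (by simpa using h1)
                have h2' : u' = (2 : Fin 3) := Fin.ext (by simpa using h2)
                rw [this, h2']
                rfl
              · have : u = (2 : Fin 3) := Fin.ext (by simpa using h1)
                have h2' : u' = (1 : Fin 3) := Fin.ext (by simpa using h2)
                rw [this, h2']
                exact Sym2.eq_swap
  have hedget : tEdge G ∈ (RGraph G).edgeSet := by
    rw [tEdge, SimpleGraph.mem_edgeSet, adj_iff]
    rfl
  have hedge1 : ∀ i (hik : i < k), mv G l₁ l₂' k M i ∈ (RGraph G).edgeSet := by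
    intro i hik
    rw [hmv1 i hik, SimpleGraph.mem_edgeSet, adj_iff]
    rfl
  have hedge2 : ∀ q r (hq : q < M) (hr : r < 3),
      mv G l₁ l₂' k M (k + 3 * q + r) ∈ (RGraph G).edgeSet := by
    intro q r hq hr
    rw [hmv2 q r hq hr]
    interval_cases r
    · rw [if_pos rfl, SimpleGraph.mem_edgeSet, adj_iff]
      simp [radjB, mem_iff_inf_sup]
    · rw [if_neg (by norm_num), if_pos rfl, SimpleGraph.mem_edgeSet, adj_iff]
      simp [radjB, mem_iff_inf_sup]
    · rw [if_neg (by norm_num), if_neg (by norm_num), SimpleGraph.mem_edgeSet, adj_iff]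
      rfl
  have hold1 : ∀ i (hik : i < k),
      stCs G l₁ l₂ k nm i (mv G l₁ l₂' k M i) = .inr (.inr 0) ∧
      stCs G l₁ l₂ k nm (i + 1) (mv G l₁ l₂' k M i) = .inl (l₁[i]'(by rwa [hl₁len])) := by
    intro i hik
    rw [hmv1 i hik, stCs_mk, stCs_mk]
    constructor
    · simp only [headC]
      rw [if_neg]
      intro ⟨hc, _⟩
      exact not_mem_take_self hl₁nd (by rwa [hl₁len]) (by simpa using hc)
    · simp only [headC]
      rw [if_pos]
      refine ⟨?_, rfl⟩
      simp only [decide_eq_true_eq]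
      exact (mem_take_succ_iff (by rwa [hl₁len])).2 (Or.inr rfl)
  have hold2 : ∀ q r (hq : q < M) (hr : r < 3),
      stCs G l₁ l₂ k nm (k + 3 * q + r) (mv G l₁ l₂' k M (k + 3 * q + r)) ≠
      stCs G l₁ l₂ k nm (k + 3 * q + r + 1) (mv G l₁ l₂' k M (k + 3 * q + r)) := by
    intro q r hq hr
    have he0mem : (l₂[q]'(by rwa [hl₂len])) ∈ ES := (hESl₂ _).1 (List.getElem_mem _)
    obtain ⟨hinf0, hsup0, hne0⟩ := hinfS _ he0mem
    have hq1 : (l₂'[q]'(by rwa [hl₂'len])).1 = l₂[q]'(by rwa [hl₂len]) := hl₂'get q hq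
    have hv := (hfstage2 q r hq hr (l₂'[q]'(by rwa [hl₂'len])).1).2 (by rw [hq1])
    have hne0' : einf (l₂'[q]'(by rwa [hl₂'len])).1 ≠ esup (l₂'[q]'(by rwa [hl₂'len])).1 := by
      rw [hq1]; exact hne0
    rw [hmv2 q r hq hr]
    interval_cases r
    · rw [if_pos rfl, stCs_mk, stCs_mk]
      simp only [headC, Nat.add_zero, Nat.zero_add] at *
      rw [if_neg (by simp [flipA, hv.1, hne0']), if_pos (by simp [flipA, hv.2])]
      simp
    · rw [if_neg (by norm_num), if_pos rfl, stCs_mk, stCs_mk]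
      simp only [headC] at *
      have hne0'' : esup (l₂'[q]'(by rwa [hl₂'len])).1 ≠ einf (l₂'[q]'(by rwa [hl₂'len])).1 :=
        fun h => hne0' h.symm
      rw [if_neg (by simp [flipA, hv.1, hne0'']), if_pos (by simp [flipA, hv.2])]
      simp
    · rw [if_neg (by norm_num), if_neg (by norm_num), stCs_mk, stCs_mk]
      simp only [headC] at *
      rw [if_neg (by simp [hv.1]), if_pos (by simp [hv.2])]
      simp
  have hold3 : stCs G l₁ l₂ k nm (k + 3 * M) (tEdge G) = .inr (.inr 1) ∧
      stCs G l₁ l₂ k nm (k + 3 * M + 1) (tEdge G) = .inr (.inr 2) := by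
    rw [tEdge, stCs_mk, stCs_mk]
    constructor
    · simp only [headC]
      rw [if_neg]
      simp [hnmdef]
    · simp only [headC]
      rw [if_pos]
      simp [hnmdef]
  have hfsat' : ∀ i', nm ≤ i' → ∀ e ∈ l₂, hfSt l₂ k i' e = 3 := by
    intro i' hi e he
    rw [hfSt, if_pos he]
    have hidx : l₂.idxOf e < M := by rw [← hl₂len]; exact List.idxOf_lt_length_iff.2 he
    omega
  have hfgek : ∀ i' e, 1 ≤ hfSt l₂ k i' e → k < i' := by
    intro i' e h
    have hmem' : e ∈ l₂ := hfpos i' e h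
    rw [hfSt, if_pos hmem'] at h
    omega
  have legal_all : ∀ i', Legal (RGraph G) (wR G Δ k) (μR G Δ k) (stCs G l₁ l₂ k nm i') := by
    intro i' v
    rcases v with w₀ | e₀ | u₀
    · -- vertex a_{w₀}
      have hinc : ∀ f ∈ G.incidenceFinset w₀, f ∈ G.edgeFinset ∧ w₀ ∈ f := by
        intro f hf
        rw [SimpleGraph.mem_incidenceFinset] at hf
        exact ⟨SimpleGraph.mem_edgeFinset.2 hf.1, hf.2⟩
      set D := (G.incidenceFinset w₀).filter (fun f => ¬ flipA (hfSt l₂ k i') f w₀) with hD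
      set F := (G.incidenceFinset w₀).filter (fun f => flipA (hfSt l₂ k i') f w₀) with hF
      have hDF : F.card + D.card = G.degree w₀ := by
        rw [hD, hF, Finset.card_filter_add_card_filter_not,
          SimpleGraph.card_incidenceFinset_eq_degree]
      have hTD : ∀ (memp : ∀ f ∈ D, f ∈ G.edgeFinset),
          (D.attach.image fun f =>
            (s(.inl w₀, .inr (.inl ⟨f.1, memp f.1 f.2⟩)) : Sym2 (RV G))) ⊆
              (RGraph G).edgeFinset ∧
          (∀ g ∈ (D.attach.image fun f =>
            (s(.inl w₀, .inr (.inl ⟨f.1, memp f.1 f.2⟩)) : Sym2 (RV G))),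
            stCs G l₁ l₂ k nm i' g = .inl w₀) ∧
          (∑ g ∈ (D.attach.image fun f =>
            (s(.inl w₀, .inr (.inl ⟨f.1, memp f.1 f.2⟩)) : Sym2 (RV G))), wR G Δ k g)
            = D.card := by
        intro memp
        refine ⟨?_, ?_, ?_⟩
        · intro g hg
          rw [Finset.mem_image] at hg
          obtain ⟨f, _, rfl⟩ := hg
          rw [SimpleGraph.mem_edgeFinset, SimpleGraph.mem_edgeSet, adj_iff]
          have := (hinc f.1 (Finset.mem_filter.1 f.2).1).2
          simpa [radjB] using this
        · intro g hg
          rw [Finset.mem_image] at hg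
          obtain ⟨f, _, rfl⟩ := hg
          rw [stCs_mk]
          simp only [headC]
          rw [if_neg]
          exact (Finset.mem_filter.1 f.2).2
        · rw [Finset.sum_image]
          · rw [Finset.sum_congr rfl (fun f _ => wR_ab G Δ k w₀ _)]
            simp
          · intro a _ b _ h
            apply Subtype.ext
            simpa [Sym2.eq_iff] using h
      have memp : ∀ f ∈ D, f ∈ G.edgeFinset := fun f hf =>
        (hinc f (Finset.mem_filter.1 hf).1).1
      obtain ⟨hT1, hT2, hT3⟩ := hTD memp
      show G.degree w₀ ≤ _
      by_cases hF0 : F = ∅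
      · have hDdeg : D.card = G.degree w₀ := by rw [← hDF, hF0]; simp
        calc G.degree w₀ = _ := hDdeg.symm
          _ = _ := hT3.symm
          _ ≤ _ := inflow_lower (RGraph G) (wR G Δ k) _ _ _ hT1 hT2
      · -- some incident edge flipped: w₀ ∈ S and i' > k
        obtain ⟨f₀, hf₀⟩ := Finset.nonempty_iff_ne_empty.2 hF0
        rw [hF, Finset.mem_filter] at hf₀
        have hf₀1 : 1 ≤ hfSt l₂ k i' f₀ := by
          rcases hf₀.2 with ⟨_, h⟩ | ⟨_, h⟩ <;> omega
        have hik : k < i' := hfgek i' f₀ hf₀1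
        have hf₀l₂ : f₀ ∈ l₂ := hfpos i' f₀ hf₀1
        have hw₀S : w₀ ∈ S := by
          have hES' : f₀ ∈ ES := (hESl₂ f₀).1 hf₀l₂
          rw [hESdef, Finset.mem_filter] at hES'
          exact Finset.mem_sym2_iff.1 hES'.1 _ (hinc f₀ hf₀.1).2
        have hFS : F ⊆ (S.erase w₀).image (fun u => s(w₀, u)) := by
          intro f hf
          rw [hF, Finset.mem_filter] at hf
          have hf1 : 1 ≤ hfSt l₂ k i' f := by
            rcases hf.2 with ⟨_, h⟩ | ⟨_, h⟩ <;> omega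
          have hfl₂ : f ∈ l₂ := hfpos i' f hf1
          have hES' : f ∈ ES := (hESl₂ f).1 hfl₂
          rw [hESdef, Finset.mem_filter] at hES'
          have hwf : w₀ ∈ f := (hinc f hf.1).2
          have hof : s(w₀, Sym2.Mem.other' hwf) = f := Sym2.other_spec' hwf
          rw [Finset.mem_image]
          refine ⟨Sym2.Mem.other' hwf, ?_, hof⟩
          rw [Finset.mem_erase]
          constructor
          · rw [← Sym2.other_eq_other']
            exact Sym2.other_ne hES'.2 hwf
          · exact Finset.mem_sym2_iff.1 hES'.1 _ (Sym2.other_mem' hwf)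
        have hFcard : F.card ≤ k - 1 := by
          calc F.card ≤ ((S.erase w₀).image (fun u => s(w₀, u))).card :=
                Finset.card_le_card hFS
            _ ≤ (S.erase w₀).card := Finset.card_image_le
            _ = k - 1 := by rw [Finset.card_erase_of_mem hw₀S, hkS]
        have hkΔ : k - 1 ≤ Δ := hΔk w₀ hw₀S
        set T := insert (s(.inl w₀, .inr (.inr 0)) : Sym2 (RV G))
          (D.attach.image fun f =>
            (s(.inl w₀, .inr (.inl ⟨f.1, memp f.1 f.2⟩)) : Sym2 (RV G))) with hTdef
        have hnotmem : (s(.inl w₀, .inr (.inr 0)) : Sym2 (RV G)) ∉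
            (D.attach.image fun f =>
              (s(.inl w₀, .inr (.inl ⟨f.1, memp f.1 f.2⟩)) : Sym2 (RV G))) := by
          rw [Finset.mem_image]
          rintro ⟨f, _, h⟩
          simp [Sym2.eq_iff] at h
        have hT1' : T ⊆ (RGraph G).edgeFinset := by
          rw [hTdef]
          intro g hg
          rcases Finset.mem_insert.1 hg with rfl | hg'
          · rw [SimpleGraph.mem_edgeFinset, SimpleGraph.mem_edgeSet, adj_iff]
            rfl
          · exact hT1 hg'
        have hT2' : ∀ g ∈ T, stCs G l₁ l₂ k nm i' g = .inl w₀ := by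
          rw [hTdef]
          intro g hg
          rcases Finset.mem_insert.1 hg with rfl | hg'
          · rw [stCs_mk]
            simp only [headC]
            rw [if_pos]
            refine ⟨?_, rfl⟩
            simp only [decide_eq_true_eq]
            rw [hAstage23 i' (by omega)]
            exact (hSl₁ w₀).2 hw₀S
          · exact hT2 g hg'
        have hT3' : (∑ g ∈ T, wR G Δ k g) = Δ + D.card := by
          rw [hTdef, Finset.sum_insert hnotmem, hT3, wR_aU]
        calc G.degree w₀ = F.card + D.card := hDF.symm
          _ ≤ Δ + D.card := by omega
          _ = _ := hT3'.symm
          _ ≤ _ := inflow_lower (RGraph G) (wR G Δ k) _ _ _ hT1' hT2'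
    · -- vertex b_{e₀}
      show 2 ≤ _
      by_cases h3 : 3 ≤ hfSt l₂ k i' e₀.1
      · have hl : e₀.1 ∈ l₂ := hfpos i' e₀.1 (by omega)
        have hES' : e₀.1 ∈ ES := (hESl₂ _).1 hl
        obtain ⟨hinf0, hsup0, hne0⟩ := hinfS _ hES'
        set T : Finset (Sym2 (RV G)) :=
          {s(.inl (einf e₀.1), .inr (.inl e₀)), s(.inl (esup e₀.1), .inr (.inl e₀))} with hTdef
        have hT1 : T ⊆ (RGraph G).edgeFinset := by
          intro g hg
          rw [hTdef, Finset.mem_insert, Finset.mem_singleton] at hg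
          rcases hg with rfl | rfl <;>
          · rw [SimpleGraph.mem_edgeFinset, SimpleGraph.mem_edgeSet, adj_iff]
            simp [radjB, mem_iff_inf_sup]
        have hT2 : ∀ g ∈ T, stCs G l₁ l₂ k nm i' g = .inr (.inl e₀) := by
          intro g hg
          rw [hTdef, Finset.mem_insert, Finset.mem_singleton] at hg
          rcases hg with rfl | rfl <;>
          · rw [stCs_mk]
            simp only [headC]
            rw [if_pos]
            simp [flipA]
            omega
        have hT3 : (∑ g ∈ T, wR G Δ k g) = 2 := by
          rw [hTdef, Finset.sum_pair (by simp [Sym2.eq_iff, hne0])]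
          rfl
        calc (2 : ℕ) = _ := hT3.symm
          _ ≤ _ := inflow_lower (RGraph G) (wR G Δ k) _ _ _ hT1 hT2
      · set T : Finset (Sym2 (RV G)) := {s(.inr (.inl e₀), .inr (.inr 1))} with hTdef
        have hT1 : T ⊆ (RGraph G).edgeFinset := by
          intro g hg
          rw [hTdef, Finset.mem_singleton] at hg
          subst hg
          rw [SimpleGraph.mem_edgeFinset, SimpleGraph.mem_edgeSet, adj_iff]
          rfl
        have hT2 : ∀ g ∈ T, stCs G l₁ l₂ k nm i' g = .inr (.inl e₀) := by
          intro g hg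
          rw [hTdef, Finset.mem_singleton] at hg
          subst hg
          rw [stCs_mk]
          simp only [headC]
          rw [if_neg]
          tauto
        have hT3 : (∑ g ∈ T, wR G Δ k g) = 2 := by rw [hTdef, Finset.sum_singleton]; rfl
        calc (2 : ℕ) = _ := hT3.symm
          _ ≤ _ := inflow_lower (RGraph G) (wR G Δ k) _ _ _ hT1 hT2
    · -- vertices U, V, W
      fin_cases u₀
      · -- U
        show (n - k) * Δ ≤ _
        set T := ((Finset.univ \ (l₁.take i').toFinset).image
          fun w => (s(.inl w, .inr (.inr 0)) : Sym2 (RV G))) with hTdef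
        have hT1 : T ⊆ (RGraph G).edgeFinset := by
          intro g hg
          rw [hTdef, Finset.mem_image] at hg
          obtain ⟨w, _, rfl⟩ := hg
          rw [SimpleGraph.mem_edgeFinset, SimpleGraph.mem_edgeSet, adj_iff]
          rfl
        have hT2 : ∀ g ∈ T, stCs G l₁ l₂ k nm i' g = .inr (.inr 0) := by
          intro g hg
          rw [hTdef, Finset.mem_image] at hg
          obtain ⟨w, hw, rfl⟩ := hg
          rw [stCs_mk]
          simp only [headC]
          rw [if_neg]
          rw [Finset.mem_sdiff, List.mem_toFinset] at hw
          simp only [decide_eq_true_eq]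
          tauto
        have hT3 : (∑ g ∈ T, wR G Δ k g) = (Finset.univ \ (l₁.take i').toFinset).card * Δ := by
          rw [hTdef, Finset.sum_image]
          · rw [Finset.sum_congr rfl (fun w _ => wR_aU G Δ k w)]
            simp [Finset.sum_const, Nat.smul_one_eq_cast]
          · intro a _ b _ h
            simpa [Sym2.eq_iff] using h
        have hcard : n - k ≤ (Finset.univ \ (l₁.take i').toFinset).card := by
          rw [Finset.card_sdiff_of_subset (Finset.subset_univ _)]
          have h1 : (l₁.take i').toFinset.card ≤ k := by
            calc (l₁.take i').toFinset.card ≤ (l₁.take i').length := l₁.take i' |>.toFinset_card_le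
              _ ≤ l₁.length := by rw [List.length_take]; omega
              _ = k := hl₁len
          have := Finset.card_fin n
          simp only [Finset.card_univ, Fintype.card_fin]
          omega
        calc (n - k) * Δ ≤ (Finset.univ \ (l₁.take i').toFinset).card * Δ :=
              Nat.mul_le_mul_right _ hcard
          _ = _ := hT3.symm
          _ ≤ _ := inflow_lower (RGraph G) (wR G Δ k) _ _ _ hT1 hT2
      · -- V
        show k * (k - 1) ≤ _
        by_cases htb : nm ≤ i'
        · set T := (ES.attach.image
            fun e => (s(.inr (.inl ⟨e.1, hedgeES e.1 e.2⟩), .inr (.inr 1)) : Sym2 (RV G))) with hTdef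
          have hT1 : T ⊆ (RGraph G).edgeFinset := by
            intro g hg
            rw [hTdef, Finset.mem_image] at hg
            obtain ⟨e, _, rfl⟩ := hg
            rw [SimpleGraph.mem_edgeFinset, SimpleGraph.mem_edgeSet, adj_iff]
            rfl
          have hT2 : ∀ g ∈ T, stCs G l₁ l₂ k nm i' g = .inr (.inr 1) := by
            intro g hg
            rw [hTdef, Finset.mem_image] at hg
            obtain ⟨e, he, rfl⟩ := hg
            rw [stCs_mk]
            simp only [headC]
            rw [if_pos]
            exact ⟨by rw [hfsat' i' htb e.1 ((hESl₂ e.1).2 e.2)], rfl⟩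
          have hT3 : (∑ g ∈ T, wR G Δ k g) = M * 2 := by
            rw [hTdef, Finset.sum_image]
            · rw [Finset.sum_congr rfl (fun e _ => wR_bV G Δ k _)]
              simp [Finset.sum_const, hMdef]
            · intro a _ b _ h
              apply Subtype.ext
              simpa [Sym2.eq_iff] using h
          calc k * (k - 1) = M * 2 := by omega
            _ = _ := hT3.symm
            _ ≤ _ := inflow_lower (RGraph G) (wR G Δ k) _ _ _ hT1 hT2
        · set T : Finset (Sym2 (RV G)) := {tEdge G} with hTdef
          have hT1 : T ⊆ (RGraph G).edgeFinset := by
            intro g hg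
            rw [hTdef, Finset.mem_singleton] at hg
            subst hg
            exact SimpleGraph.mem_edgeFinset.2 hedget
          have hT2 : ∀ g ∈ T, stCs G l₁ l₂ k nm i' g = .inr (.inr 1) := by
            intro g hg
            rw [hTdef, Finset.mem_singleton] at hg
            subst hg
            rw [tEdge, stCs_mk]
            simp only [headC]
            rw [if_neg]
            simpa using htb
          have hT3 : (∑ g ∈ T, wR G Δ k g) = k * (k - 1) := by
            rw [hTdef, Finset.sum_singleton, wR_t]
          calc k * (k - 1) = _ := hT3.symm
            _ ≤ _ := inflow_lower (RGraph G) (wR G Δ k) _ _ _ hT1 hT2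
      · -- W
        show 0 ≤ _
        exact Nat.zero_le _
  have hl₂'inj : ∀ q q' (hq : q < M) (hq' : q' < M),
      (l₂'[q]'(by rwa [hl₂'len])) = (l₂'[q']'(by rwa [hl₂'len])) → q = q' := by
    intro q q' hq hq' h
    have h2 : (l₂[q]'(by rwa [hl₂len])) = l₂[q']'(by rwa [hl₂len]) := by
      rw [← hl₂'get q hq, ← hl₂'get q' hq', h]
    exact hl₂nd.getElem_inj_iff.1 h2
  have hnei : ∀ q (hq : q < M),
      einf (l₂'[q]'(by rwa [hl₂'len])).1 ≠ esup (l₂'[q]'(by rwa [hl₂'len])).1 := by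
    intro q hq
    rw [hl₂'get q hq]
    exact (hinfS _ ((hESl₂ _).1 (List.getElem_mem _))).2.2
  have hmvinj : ∀ i, i < nm → ∀ j, j < nm →
      mv G l₁ l₂' k M i = mv G l₁ l₂' k M j → i = j := by
    intro i hi j hj h
    rcases hcase i hi with hik | ⟨q, r, hq, hr, rfl⟩ | rfl <;>
      rcases hcase j hj with hjk | ⟨q', r', hq', hr', rfl⟩ | rfl
    · rw [hmv1 i hik, hmv1 j hjk] at h
      simp only [Sym2.eq_iff] at h
      rcases h with ⟨h1, _⟩ | ⟨h1, h2⟩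
      · exact hl₁nd.getElem_inj_iff.1 (by injection h1)
      · exact absurd h1 (by simp)
    · rw [hmv1 i hik, hmv2 q' r' hq' hr'] at h
      interval_cases r' <;> simp [Sym2.eq_iff] at h
    · rw [hmv1 i hik, hmv3] at h
      simp [tEdge, Sym2.eq_iff] at h
    · rw [hmv1 j hjk, hmv2 q r hq hr] at h
      interval_cases r <;> simp [Sym2.eq_iff] at h
    · rw [hmv2 q r hq hr, hmv2 q' r' hq' hr'] at h
      interval_cases r <;> interval_cases r' <;> simp [Sym2.eq_iff] at h
      all_goals
        first
        | (obtain ⟨h1, h2⟩ := h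
           have hqq := hl₂'inj q q' hq hq' h2
           subst hqq
           first
           | omega
           | exact absurd h1 (hnei q hq)
           | exact absurd h1.symm (hnei q hq))
        | (have hqq := hl₂'inj q q' hq hq' h
           omega)
    · rw [hmv2 q r hq hr, hmv3] at h
      interval_cases r <;> simp [tEdge, Sym2.eq_iff] at h
    · rw [hmv1 j hjk, hmv3] at h
      simp [tEdge, Sym2.eq_iff] at h
    · rw [hmv2 q' r' hq' hr', hmv3] at h
      interval_cases r' <;> simp [tEdge, Sym2.eq_iff] at h
    · rfl
  have hdiff_all : ∀ i', i' < nm → ∀ f ∈ (RGraph G).edgeSet, f ≠ mv G l₁ l₂' k M i' →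
      stCs G l₁ l₂ k nm i' f = stCs G l₁ l₂ k nm (i' + 1) f := by
    intro i' hi' f hf hne
    rcases hcase i' hi' with hik | ⟨q, r, hq, hr, rfl⟩ | rfl
    · exact stage1diff i' hik f hf hne
    · exact stage2diff q r hq hr f hf hne
    · rw [hmv3] at hne
      exact stage3diff f hf hne
  have hedge_all : ∀ i', i' < nm → mv G l₁ l₂' k M i' ∈ (RGraph G).edgeSet := by
    intro i' hi'
    rcases hcase i' hi' with hik | ⟨q, r, hq, hr, rfl⟩ | rfl
    · exact hedge1 i' hik
    · exact hedge2 q r hq hr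
    · rw [hmv3]; exact hedget
  have hne_all : ∀ i', i' < nm → stCs G l₁ l₂ k nm i' (mv G l₁ l₂' k M i') ≠
      stCs G l₁ l₂ k nm (i' + 1) (mv G l₁ l₂' k M i') := by
    intro i' hi'
    rcases hcase i' hi' with hik | ⟨q, r, hq, hr, rfl⟩ | rfl
    · rw [(hold1 i' hik).1, (hold1 i' hik).2]; simp
    · exact hold2 q r hq hr
    · rw [hmv3, hold3.1, hold3.2]; simp
  have hm₀ : k + 3 * (k * (k - 1)) / 2 + 1 = nm := by rw [hnmdef]; omega
  refine ⟨fun i => stCs G l₁ l₂ k nm i.val, ?_, ⟨?_, ?_⟩, ?_, ?_⟩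
  · -- ConfEq with the initial configuration
    intro e he
    beta_reduce
    have h0v : ((0 : Fin (k + 3 * (k * (k - 1)) / 2 + 1 + 1)) : ℕ) = 0 := rfl
    rw [h0v]
    have hf00 : ∀ e, hfSt l₂ k 0 e = 0 := by
      intro e
      rw [hfSt]
      split
      · omega
      · rfl
    have htb0 : decide (nm ≤ 0) = false := decide_eq_false (by omega)
    induction e using Sym2.ind with
    | _ x y =>
      have hCR : CR G s(x, y) = headR G x y := rfl
      rw [stCs_mk, hCR]
      rcases x with w | e | u <;> rcases y with w' | e' | u' <;>
        simp [headC, headR, flipA, hf00, htb0]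
  · -- IsConf and Legal
    intro i
    exact ⟨isConf_CfgC G _ _ _, legal_all _⟩
  · -- Steps
    intro i
    have hiv : (i : ℕ) < nm := by rw [← hm₀]; exact i.isLt
    exact ⟨mv G l₁ l₂' k M i.val, hedge_all _ hiv, hne_all _ hiv,
      fun f hf hne => hdiff_all _ hiv f hf hne⟩
  · -- AtMostOnce
    intro e he i j hdi hdj
    have hiv : (i : ℕ) < nm := by rw [← hm₀]; exact i.isLt
    have hjv : (j : ℕ) < nm := by rw [← hm₀]; exact j.isLt
    have hei : e = mv G l₁ l₂' k M i.val := by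
      by_contra hc
      exact hdi (hdiff_all _ hiv e he hc)
    have hej : e = mv G l₁ l₂' k M j.val := by
      by_contra hc
      exact hdj (hdiff_all _ hjv e he hc)
    exact Fin.ext (hmvinj _ hiv _ hjv (hei.symm.trans hej))
  · -- last step reverses the target edge
    beta_reduce
    have hv1 : ((Fin.castSucc (Fin.last (k + 3 * (k * (k - 1)) / 2 + 1 - 1))) : ℕ) =
        k + 3 * M := by
      rw [Fin.coe_castSucc, Fin.val_last]
      omega
    have hv2 : ((Fin.last (k + 3 * (k * (k - 1)) / 2 + 1)) : ℕ) = k + 3 * M + 1 := by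
      rw [Fin.val_last]
      omega
    rw [hv1, hv2, hold3.1, hold3.2]
    simp
end

section
/- Let G be a constraint graph, C_1 a legal configuration of G, e* an edge of G, and l ≥ 1. If there exists a reconfiguration sequence of length at most l starting at C_1 that reverses e* at some step, then there exists such a sequence of length at most l in which every edge reversed at any step lies at distance at most l − 1 from e* in the line graph of G. -/
/-- The line graph of `G`, on the vertex set `Sym2 V`: two edges of `G` are
adjacent iff they are distinct and share an endpoint. -/
def LineG {V : Type} (G : SimpleGraph V) : SimpleGraph (Sym2 V) where
  Adj e f := e ≠ f ∧ e ∈ G.edgeSet ∧ f ∈ G.edgeSet ∧ ∃ v, v ∈ e ∧ v ∈ f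
  symm := by
    refine ⟨?_⟩
    rintro e f ⟨h1, h2, h3, v, hv1, hv2⟩
    exact ⟨h1.symm, h3, h2, v, hv2, hv1⟩
  loopless := by refine ⟨?_⟩; rintro e ⟨h1, -⟩; exact h1 rfl

section Aux

variable {V : Type} [Fintype V] [DecidableEq V] (G : SimpleGraph V)
    [DecidableRel G.Adj] (w : Sym2 V → ℕ) (μ : V → ℕ)

/-- ℕ-indexed reconfiguration sequence of length `m`. -/
def NSeq (m : ℕ) (Cs : ℕ → Sym2 V → V) : Prop :=
  (∀ i ≤ m, IsConf G (Cs i) ∧ Legal G w μ (Cs i)) ∧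
    ∀ i < m, Step G (Cs i) (Cs (i + 1))

lemma nseq_const_of_noRev {m : ℕ} {Cs : ℕ → Sym2 V → V}
    (h : NSeq G w μ m Cs) {g : Sym2 V}
    (hnr : ¬ ∃ i, i < m ∧ Cs i g ≠ Cs (i + 1) g) :
    ∀ i ≤ m, Cs i g = Cs 0 g := by
  push_neg at hnr
  intro i hi
  induction i with
  | zero => rfl
  | succ n ih =>
    rw [← hnr n (by omega)]
    exact ih (by omega)

lemma main_lemma (estar : Sym2 V) (he : estar ∈ G.edgeSet) :
    ∀ (m : ℕ) (Cs : ℕ → Sym2 V → V), NSeq G w μ m Cs →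
      (∃ i, i < m ∧ Cs i estar ≠ Cs (i + 1) estar) →
      ∃ m', m' ≤ m ∧ ∃ Ds : ℕ → Sym2 V → V, NSeq G w μ m' Ds ∧
        ConfEq G (Ds 0) (Cs 0) ∧
        (∃ i, i < m' ∧ Ds i estar ≠ Ds (i + 1) estar) ∧
        ∀ f ∈ G.edgeSet, (∃ i, i < m' ∧ Ds i f ≠ Ds (i + 1) f) →
          ∃ p : (LineG G).Walk estar f, p.length ≤ m - 1 := by
  intro m
  induction m with
  | zero => rintro Cs _ ⟨i, hi, _⟩; omega
  | succ m ih =>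
    intro Cs hseq hrev
    by_cases ha : Cs 0 estar ≠ Cs 1 estar
    · -- the first step reverses e*; truncate to length 1
      refine ⟨1, by omega, Cs,
        ⟨fun i hi => hseq.1 i (by omega), fun i hi => ?_⟩,
        fun e _ => rfl, ⟨0, by omega, ha⟩, ?_⟩
      · have h0 : i = 0 := by omega
        subst h0; exact hseq.2 0 (by omega)
      · rintro f hf ⟨i, hi, hrevf⟩
        have h0 : i = 0 := by omega
        subst h0
        obtain ⟨e, heE, hne, hoth⟩ := hseq.2 0 (by omega)
        have hee : e = estar := by
          by_contra hne'
          exact ha (hoth estar he (fun h => hne' h.symm))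
        subst hee
        have hfe : f = e := by
          by_contra hne'
          exact hrevf (hoth f hf hne')
        subst hfe
        exact ⟨.nil, by simp⟩
    · push_neg at ha
      obtain ⟨i0, hi0, hrev0⟩ := hrev
      have hi0' : 1 ≤ i0 := by
        rcases Nat.eq_zero_or_pos i0 with h | h
        · subst h; exact absurd ha hrev0
        · exact h
      -- the tail sequence
      have hTseq : NSeq G w μ m (fun n => Cs (n + 1)) :=
        ⟨fun i hi => hseq.1 (i + 1) (by omega),
         fun i hi => hseq.2 (i + 1) (by omega)⟩
      have hTrev : ∃ i, i < m ∧ Cs (i + 1) estar ≠ Cs (i + 1 + 1) estar := by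
        refine ⟨i0 - 1, by omega, ?_⟩
        rw [Nat.sub_add_cancel hi0']
        exact hrev0
      obtain ⟨m', hm', Ds, hDseq, hDconf, hDrev, hDwalk⟩ := ih _ hTseq hTrev
      have hD0 : ∀ e ∈ G.edgeSet, Ds 0 e = Cs 1 e := hDconf
      obtain ⟨f, hfE, hfne, hfoth⟩ := hseq.2 0 (by omega)
      by_cases hw : ∃ p : (LineG G).Walk estar f, p.length ≤ m
      · -- keep the first step, prepend it to `Ds`
        obtain ⟨p, hp⟩ := hw
        refine ⟨m' + 1, by omega,
          (fun n => if n = 0 then Cs 0 else Ds (n - 1)), ⟨?_, ?_⟩, ?_, ?_, ?_⟩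
        · intro i hi
          rcases Nat.eq_zero_or_pos i with h0 | h0
          · subst h0; simpa using hseq.1 0 (by omega)
          · have hne0 : i ≠ 0 := by omega
            simpa [hne0] using hDseq.1 (i - 1) (by omega)
        · intro i hi
          rcases Nat.eq_zero_or_pos i with h0 | h0
          · subst h0
            show Step G (Cs 0) (Ds 0)
            refine ⟨f, hfE, ?_, ?_⟩
            · rw [hD0 f hfE]
              exact hfne
            · intro g hg hgne
              rw [hD0 g hg]
              exact hfoth g hg hgne
          · obtain ⟨j, rfl⟩ : ∃ j, i = j + 1 := ⟨i - 1, by omega⟩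
            simp only [if_neg (Nat.succ_ne_zero j), if_neg (Nat.succ_ne_zero (j + 1)),
              Nat.add_sub_cancel]
            exact hDseq.2 j (by omega)
        · intro e _; simp
        · obtain ⟨i, him, hir⟩ := hDrev
          refine ⟨i + 1, by omega, ?_⟩
          simpa [Nat.succ_ne_zero, Nat.add_sub_cancel] using hir
        · rintro g hgE ⟨i, hi, hgr⟩
          rcases Nat.eq_zero_or_pos i with h0 | h0
          · subst h0
            have hgr' : Cs 0 g ≠ Ds 0 g := hgr
            have hgf : g = f := by
              by_contra hne'
              apply hgr'
              rw [hD0 g hgE]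
              exact hfoth g hgE hne'
            subst hgf
            exact ⟨p, by omega⟩
          · obtain ⟨j, rfl⟩ : ∃ j, i = j + 1 := ⟨i - 1, by omega⟩
            simp only [if_neg (Nat.succ_ne_zero j), if_neg (Nat.succ_ne_zero (j + 1)),
              Nat.add_sub_cancel] at hgr
            obtain ⟨q, hq⟩ := hDwalk g hgE ⟨j, by omega, hgr⟩
            exact ⟨q, by omega⟩
      · -- drop the first step: `f` is too far, fix it to its original head
        have hm1 : 1 ≤ m' := by obtain ⟨i, hi, _⟩ := hDrev; omega
        have hef : estar ≠ f := by
          rintro rfl; exact hw ⟨.nil, by simp⟩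
        -- every edge equal to f or sharing an endpoint with f is never reversed in Ds
        have hfixed : ∀ g ∈ G.edgeSet, (g = f ∨ ∃ x, x ∈ g ∧ x ∈ f) →
            ∀ i ≤ m', Ds i g = Ds 0 g := by
          intro g hg hcase
          apply nseq_const_of_noRev G w μ hDseq
          intro hrev'
          obtain ⟨q, hq⟩ := hDwalk g hg hrev'
          rcases hcase with rfl | ⟨x, hxg, hxf⟩
          · exact hw ⟨q, by omega⟩
          · by_cases hgf : g = f
            · subst hgf; exact hw ⟨q, by omega⟩
            · exact hw ⟨q.concat (show (LineG G).Adj g f from ⟨hgf, hg, hfE, x, hxg, hxf⟩),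
                by rw [SimpleGraph.Walk.length_concat]; omega⟩
        refine ⟨m', by omega,
          (fun n e => if e = f then Cs 0 f else Ds n e), ⟨?_, ?_⟩, ?_, ?_, ?_⟩
        · intro i hi
          constructor
          · intro e heE
            by_cases hef' : e = f
            · subst hef'; simpa using (hseq.1 0 (by omega)).1 e heE
            · simpa [hef'] using (hDseq.1 i hi).1 e heE
          · intro x
            by_cases hx : x ∈ f
            · have hsum : ∑ e ∈ G.edgeFinset,
                  (if (if e = f then Cs 0 f else Ds i e) = x then w e else 0) =
                  ∑ e ∈ G.edgeFinset, (if Cs 0 e = x then w e else 0) := by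
                apply Finset.sum_congr rfl
                intro e heF
                have heE : e ∈ G.edgeSet := by
                  rwa [SimpleGraph.mem_edgeFinset] at heF
                by_cases hef' : e = f
                · subst hef'; simp
                · by_cases hxe : x ∈ e
                  · have h1 : Ds i e = Ds 0 e :=
                      hfixed e heE (Or.inr ⟨x, hxe, hx⟩) i hi
                    rw [if_neg hef', h1, hD0 e heE, ← hfoth e heE hef']
                  · have h1 : (if e = f then Cs 0 f else Ds i e) ≠ x := by
                      rw [if_neg hef']
                      intro h; exact hxe (h ▸ (hDseq.1 i hi).1 e heE)
                    have h2 : Cs 0 e ≠ x := fun h =>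
                      hxe (h ▸ (hseq.1 0 (by omega)).1 e heE)
                    rw [if_neg h1, if_neg h2]
              rw [hsum]
              exact (hseq.1 0 (by omega)).2 x
            · have hsum : ∑ e ∈ G.edgeFinset,
                  (if (if e = f then Cs 0 f else Ds i e) = x then w e else 0) =
                  ∑ e ∈ G.edgeFinset, (if Ds i e = x then w e else 0) := by
                apply Finset.sum_congr rfl
                intro e heF
                have heE : e ∈ G.edgeSet := by
                  rwa [SimpleGraph.mem_edgeFinset] at heF
                by_cases hef' : e = f
                · subst hef'
                  have h1 : Cs 0 e ≠ x := fun h =>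
                    hx (h ▸ (hseq.1 0 (by omega)).1 e heE)
                  have h2 : Ds i e ≠ x := fun h =>
                    hx (h ▸ (hDseq.1 i hi).1 e heE)
                  rw [if_pos rfl, if_neg h1, if_neg h2]
                · rw [if_neg hef']
              rw [hsum]
              exact (hDseq.1 i hi).2 x
        · intro i hi
          obtain ⟨g, hgE, hgne, hgoth⟩ := hDseq.2 i hi
          have hgf : g ≠ f := by
            rintro rfl
            have h1 := hfixed g hgE (Or.inl rfl)
            exact hgne (by rw [h1 i (by omega), h1 (i + 1) (by omega)])
          refine ⟨g, hgE, ?_, ?_⟩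
          · simpa [hgf] using hgne
          · intro h hhE hhg
            by_cases hhf : h = f
            · subst hhf; simp
            · simpa [hhf] using hgoth h hhE hhg
        · intro e heE
          by_cases hef' : e = f
          · subst hef'; simp
          · simp only [if_neg hef']
            rw [hD0 e heE]
            exact (hfoth e heE hef').symm
        · obtain ⟨i, hi, hir⟩ := hDrev
          refine ⟨i, hi, ?_⟩
          simpa [hef] using hir
        · rintro g hgE ⟨i, hi, hgr⟩
          have hgf : g ≠ f := by
            rintro rfl; simp at hgr
          simp only [if_neg hgf] at hgr
          obtain ⟨q, hq⟩ := hDwalk g hgE ⟨i, hi, hgr⟩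
          exact ⟨q, by omega⟩

end Aux

theorem stmt10 {V : Type} [Fintype V] [DecidableEq V] (G : SimpleGraph V)
    [DecidableRel G.Adj] (w : Sym2 V → ℕ) (μ : V → ℕ)
    (C₁ : Sym2 V → V) (h₁ : IsConf G C₁ ∧ Legal G w μ C₁)
    (estar : Sym2 V) (he : estar ∈ G.edgeSet) (l : ℕ) (hl : 1 ≤ l)
    (h : ∃ (m : ℕ) (Cs : Fin (m + 1) → Sym2 V → V), m ≤ l ∧
        ConfEq G (Cs 0) C₁ ∧ IsReconfSeq G w μ Cs ∧
        ∃ i : Fin m, Cs i.castSucc estar ≠ Cs i.succ estar) :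
    ∃ (m : ℕ) (Cs : Fin (m + 1) → Sym2 V → V), m ≤ l ∧
        ConfEq G (Cs 0) C₁ ∧ IsReconfSeq G w μ Cs ∧
        (∃ i : Fin m, Cs i.castSucc estar ≠ Cs i.succ estar) ∧
        ∀ f ∈ G.edgeSet, (∃ i : Fin m, Cs i.castSucc f ≠ Cs i.succ f) →
          ∃ p : (LineG G).Walk estar f, p.length ≤ l - 1 := by
  obtain ⟨m, Cs, hml, hconf1, ⟨hcl, hst⟩, i0, hrev⟩ := h
  -- convert to an ℕ-indexed sequence
  set Ns : ℕ → Sym2 V → V :=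
    fun n => Cs ⟨min n m, Nat.lt_succ_of_le (Nat.min_le_right n m)⟩ with hNsdef
  have hNs_eq : ∀ i, (hi : i ≤ m) → Ns i = Cs ⟨i, by omega⟩ := by
    intro i hi
    exact congrArg Cs (Fin.ext (min_eq_left hi))
  have hNseq : NSeq G w μ m Ns := by
    constructor
    · intro i hi
      rw [hNs_eq i hi]
      exact hcl _
    · intro i hi
      rw [hNs_eq i (by omega), hNs_eq (i + 1) (by omega)]
      exact hst ⟨i, hi⟩
  have hNrev : ∃ i, i < m ∧ Ns i estar ≠ Ns (i + 1) estar := by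
    refine ⟨i0.val, i0.isLt, ?_⟩
    rw [hNs_eq i0.val (by omega), hNs_eq (i0.val + 1) (by omega)]
    exact hrev
  obtain ⟨m', hm', Ds, hDseq, hDconf, hDrev, hDwalk⟩ :=
    main_lemma G w μ estar he m Ns hNseq hNrev
  refine ⟨m', fun i => Ds i.val, le_trans hm' hml, ?_, ⟨?_, ?_⟩, ?_, ?_⟩
  · intro e heE
    have h1 : Ds 0 e = Ns 0 e := hDconf e heE
    have h2 : Ns 0 e = Cs 0 e := by
      rw [hNs_eq 0 (Nat.zero_le m)]
      exact congrFun (congrArg Cs (Fin.ext rfl)) e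
    calc (fun i : Fin (m' + 1) => Ds i.val) 0 e = Ds 0 e := rfl
      _ = Cs 0 e := h1.trans h2
      _ = C₁ e := hconf1 e heE
  · intro i
    exact hDseq.1 i.val (Nat.lt_succ_iff.mp i.isLt)
  · intro i
    exact hDseq.2 i.val i.isLt
  · obtain ⟨i, hi, hir⟩ := hDrev
    exact ⟨⟨i, hi⟩, hir⟩
  · rintro g hgE ⟨i, hir⟩
    obtain ⟨q, hq⟩ := hDwalk g hgE ⟨i.val, i.isLt, hir⟩
    exact ⟨q, by omega⟩
end

section
/- Let G be a finite simple graph and let G' be its triangle replacement. For every set S ⊆ V(G): S is a vertex cover of G if and only if S is a feedback vertex set of G'. -/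
/-!
STATEMENT 13: Let G be a finite simple graph and let G' be its triangle
replacement. For every set S ⊆ V(G): S is a vertex cover of G if and only if
S is a feedback vertex set of G'.

The triangle replacement is built on the vertex type `V ⊕ {e // e ∈ G.edgeSet}`:
`Sum.inl u` is the original vertex `u` and `Sum.inr e` is the new vertex `x_e`
added for the edge `e`.
-/

/-- `S` is a vertex cover of `G`. -/
def IsVC {V : Type} (G : SimpleGraph V) (S : Set V) : Prop :=
  ∀ ⦃u v : V⦄, G.Adj u v → u ∈ S ∨ v ∈ S

/-- `S` is a feedback vertex set of `H`: it meets every cycle of `H`. -/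
def IsFVS {W : Type} (H : SimpleGraph W) (S : Set W) : Prop :=
  ∀ (v : W) (c : H.Walk v v), c.IsCycle → ∃ u ∈ c.support, u ∈ S

/-- The triangle replacement `G'` of `G`: for every edge `e = {u,v}` of `G`, a
new vertex `x_e` adjacent to `u` and to `v` is added (keeping all edges of
`G`). -/
def TriRep {V : Type} (G : SimpleGraph V) :
    SimpleGraph (V ⊕ {e : Sym2 V // e ∈ G.edgeSet}) where
  Adj a b :=
    match a, b with
    | .inl u, .inl v => G.Adj u v
    | .inl u, .inr e => u ∈ (e : Sym2 V)
    | .inr e, .inl u => u ∈ (e : Sym2 V)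
    | .inr _, .inr _ => False
  symm := by
    constructor
    rintro (u | e) (v | f) h
    · exact G.adj_symm h
    · exact h
    · exact h
    · exact h.elim
  loopless := by
    constructor
    rintro (u | e) h
    · exact G.irrefl h
    · exact h

open SimpleGraph

lemma mem_support_rotate {W : Type} [DecidableEq W] {H : SimpleGraph W} {v u x : W}
    (c : H.Walk v v) (h : u ∈ c.support) (hx : x ∈ (c.rotate u h).support) : x ∈ c.support := by
  unfold SimpleGraph.Walk.rotate at hx
  rw [Walk.mem_support_append_iff] at hx
  rw [← c.take_spec h, Walk.mem_support_append_iff]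
  tauto

lemma key {V : Type} (G : SimpleGraph V) {u : V}
    (c : (TriRep G).Walk (Sum.inl u) (Sum.inl u)) (hc : c.IsCycle) :
    ∃ a b, G.Adj a b ∧ Sum.inl a ∈ c.support ∧ Sum.inl b ∈ c.support := by
  cases c with
  | nil => exact absurd rfl hc.ne_nil
  | cons h p =>
    rename_i b
    cases b with
    | inl w =>
      exact ⟨u, w, h, List.mem_cons_self, List.mem_cons_of_mem _ p.start_mem_support⟩
    | inr e =>
      cases p with
      | cons h' q =>
        rename_i b'
        cases b' with
        | inr f => exact h'.elim
        | inl w =>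
          have hu : u ∈ (e : Sym2 V) := h
          have hw : w ∈ (e : Sym2 V) := h'
          have hne : u ≠ w := by
            rintro rfl
            have := hc.edges_nodup
            simp [Walk.edges_cons, Sym2.eq_swap] at this
          have he : (e : Sym2 V) = s(u, w) := ((Sym2.mem_and_mem_iff hne).mp ⟨hu, hw⟩)
          have hadj : G.Adj u w := by
            have := e.2
            rw [he] at this
            exact this
          exact ⟨u, w, hadj, List.mem_cons_self,
            List.mem_cons_of_mem _ (List.mem_cons_of_mem _ q.start_mem_support)⟩

theorem stmt13 {V : Type} [Fintype V] [DecidableEq V] (G : SimpleGraph V)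
    (S : Set V) :
    IsVC G S ↔ IsFVS (TriRep G) (Sum.inl '' S) := by
  constructor
  · intro hvc v c hc
    cases v with
    | inl u =>
      obtain ⟨a, b, hab, ha, hb⟩ := key G c hc
      rcases hvc hab with hs | hs
      · exact ⟨_, ha, ⟨a, hs, rfl⟩⟩
      · exact ⟨_, hb, ⟨b, hs, rfl⟩⟩
    | inr e =>
      cases c with
      | nil => exact absurd rfl hc.ne_nil
      | cons h p =>
        rename_i b
        cases b with
        | inr f => exact h.elim
        | inl w =>
          have hmem : Sum.inl w ∈ (Walk.cons h p).support :=
            List.mem_cons_of_mem _ p.start_mem_support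
          obtain ⟨a, b, hab, ha, hb⟩ := key G ((Walk.cons h p).rotate _ hmem) (hc.rotate hmem)
          rcases hvc hab with hs | hs
          · exact ⟨_, mem_support_rotate _ hmem ha, ⟨a, hs, rfl⟩⟩
          · exact ⟨_, mem_support_rotate _ hmem hb, ⟨b, hs, rfl⟩⟩
  · intro hf u v huv
    have he : s(u, v) ∈ G.edgeSet := huv
    have h1 : (TriRep G).Adj (Sum.inl u) (Sum.inl v) := huv
    have h2 : (TriRep G).Adj (Sum.inl v) (Sum.inr ⟨s(u,v), he⟩) := Sym2.mem_mk_right u v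
    have h3 : (TriRep G).Adj (Sum.inr ⟨s(u,v), he⟩) (Sum.inl u) := Sym2.mem_mk_left u v
    let c : (TriRep G).Walk (Sum.inl u) (Sum.inl u) :=
      Walk.cons h1 (Walk.cons h2 (Walk.cons h3 Walk.nil))
    have hne : u ≠ v := G.ne_of_adj huv
    have hc : c.IsCycle := by
      constructor
      · constructor
        · constructor
          simp [c, Walk.edges_cons, Sym2.eq_iff, hne, hne.symm]
        · simp [c]
      · simp [c, Walk.support_cons, hne, hne.symm]
    obtain ⟨x, hx, hxS⟩ := hf _ c hc
    obtain ⟨s, hsS, rfl⟩ := hxS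
    simp only [c, Walk.support_cons, Walk.support_nil, List.mem_cons] at hx
    rcases hx with h | h | h | h | h
    · cases h; exact Or.inl hsS
    · cases h; exact Or.inr hsS
    · exact absurd h (by simp)
    · cases h; exact Or.inl hsS
    · simp at h
end

section
/- Let G be a finite simple graph with n vertices, maximum degree at most 3, and cutwidth at most c. Then there exist an injective map φ from V(G) to the vertices of the (c+1) × 3n grid graph and, for each edge {u,v} of G, a path P_{uv} in the grid graph from φ(u) to φ(v), such that the paths are pairwise edge-disjoint and no internal vertex of any of the paths belongs to the image of φ. -/
/-!
STATEMENT 16: Let G be a finite simple graph with n vertices, maximum degree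
at most 3, and cutwidth at most c. Then there exist an injective map φ from
V(G) to the vertices of the (c+1) × 3n grid graph and, for each edge {u,v} of
G, a path P_{uv} in the grid graph from φ(u) to φ(v), such that the paths are
pairwise edge-disjoint and no internal vertex of any of the paths belongs to
the image of φ.
-/

/-- The `a × b` grid graph: vertices are pairs, adjacent iff they differ by
exactly 1 in exactly one coordinate. -/
def GridGraph (a b : ℕ) : SimpleGraph (Fin a × Fin b) where
  Adj p q :=
    (p.1 = q.1 ∧ ((p.2 : ℕ) + 1 = q.2 ∨ (q.2 : ℕ) + 1 = p.2)) ∨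
    (p.2 = q.2 ∧ ((p.1 : ℕ) + 1 = q.1 ∨ (q.1 : ℕ) + 1 = p.1))
  symm := by
    constructor
    rintro p q (⟨h, h'⟩ | ⟨h, h'⟩)
    · exact Or.inl ⟨h.symm, h'.symm⟩
    · exact Or.inr ⟨h.symm, h'.symm⟩
  loopless := by constructor; rintro p (⟨-, h | h⟩ | ⟨-, h | h⟩) <;> omega

/-- `G` has cutwidth at most `c`: for some linear arrangement of the vertices,
at most `c` edges cross each gap. -/
def CutwidthAtMost {V : Type} [Fintype V] (G : SimpleGraph V) (c : ℕ) : Prop :=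
  ∃ f : V ≃ Fin (Fintype.card V), ∀ i : ℕ,
    {e ∈ G.edgeSet | ∃ u v : V, e = s(u, v) ∧ (f u : ℕ) ≤ i ∧ i < (f v : ℕ)}.ncard ≤ c

namespace Stmt16

open SimpleGraph

variable (n c : ℕ) [NeZero n]

/-- grid vertex from nat coordinates, clamped. -/
def mk (r x : ℕ) : Fin (c + 1) × Fin (3 * n) :=
  (⟨min r c, Nat.lt_succ_of_le (min_le_right _ _)⟩,
   ⟨min x (3 * n - 1), lt_of_le_of_lt (min_le_right _ _)
     (by have := Nat.pos_of_ne_zero (NeZero.ne n); omega)⟩)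

lemma mk_fst {r : ℕ} (x : ℕ) (hr : r ≤ c) : ((mk n c r x).1 : ℕ) = r := by
  simp [mk, Nat.min_eq_left hr]

lemma mk_snd (r : ℕ) {x : ℕ} (hx : x < 3 * n) : ((mk n c r x).2 : ℕ) = x := by
  simp [mk, Nat.min_eq_left (by omega : x ≤ 3 * n - 1)]

lemma mk_inj {r x r' x' : ℕ} (hr : r ≤ c) (hx : x < 3 * n) (hr' : r' ≤ c) (hx' : x' < 3 * n)
    (h : mk n c r x = mk n c r' x') : r = r' ∧ x = x' := by
  have h1 := congrArg (fun p => ((p.1 : ℕ), (p.2 : ℕ))) h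
  simp only [mk_fst n c _ hr, mk_snd n c _ hx, mk_fst n c _ hr', mk_snd n c _ hx',
    Prod.mk.injEq] at h1
  exact h1

lemma adj_h {r x : ℕ} (hr : r ≤ c) (hx : x + 1 < 3 * n) :
    (GridGraph (c + 1) (3 * n)).Adj (mk n c r x) (mk n c r (x + 1)) := by
  refine Or.inl ⟨rfl, Or.inl ?_⟩
  rw [mk_snd n c _ (by omega), mk_snd n c _ hx]

lemma adj_v {r x : ℕ} (hr : r + 1 ≤ c) (hx : x < 3 * n) :
    (GridGraph (c + 1) (3 * n)).Adj (mk n c r x) (mk n c (r + 1) x) := by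
  refine Or.inr ⟨rfl, Or.inl ?_⟩
  rw [mk_fst n c _ (by omega), mk_fst n c _ hr]

/-- horizontal walk of length k. -/
def hwalk (r x : ℕ) (hr : r ≤ c) : (k : ℕ) → x + k < 3 * n →
    (GridGraph (c + 1) (3 * n)).Walk (mk n c r x) (mk n c r (x + k))
  | 0, _ => SimpleGraph.Walk.nil
  | k + 1, h => (hwalk r x hr k (by omega)).concat (adj_h n c hr (by omega))

lemma hwalk_edges (r x : ℕ) (hr : r ≤ c) (k : ℕ) (hk : x + k < 3 * n) :
    (hwalk n c r x hr k hk).edges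
      = (List.range k).map (fun i => s(mk n c r (x + i), mk n c r (x + i + 1))) := by
  induction k with
  | zero => simp [hwalk]
  | succ k ih =>
    simp [hwalk, SimpleGraph.Walk.edges_concat, ih, List.range_succ]
    exact Or.inl rfl

lemma hwalk_support (r x : ℕ) (hr : r ≤ c) (k : ℕ) (hk : x + k < 3 * n) :
    (hwalk n c r x hr k hk).support
      = (List.range (k + 1)).map (fun i => mk n c r (x + i)) := by
  induction k with
  | zero => simp [hwalk, List.range_succ]
  | succ k ih =>
    simp [hwalk, SimpleGraph.Walk.support_concat, ih, List.range_succ]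

/-- horizontal walk from x to y. -/
def hwalk2 (r x y : ℕ) (hr : r ≤ c) (hy : y < 3 * n) (hxy : x ≤ y) :
    (GridGraph (c + 1) (3 * n)).Walk (mk n c r x) (mk n c r y) :=
  (hwalk n c r x hr (y - x) (by omega)).copy rfl (by rw [Nat.add_sub_cancel' hxy])

lemma hwalk2_edges (r x y : ℕ) (hr : r ≤ c) (hy : y < 3 * n) (hxy : x ≤ y) :
    (hwalk2 n c r x y hr hy hxy).edges
      = (List.range (y - x)).map (fun i => s(mk n c r (x + i), mk n c r (x + i + 1))) := by
  simp [hwalk2, hwalk_edges]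

lemma hwalk2_support (r x y : ℕ) (hr : r ≤ c) (hy : y < 3 * n) (hxy : x ≤ y) :
    (hwalk2 n c r x y hr hy hxy).support
      = (List.range (y - x + 1)).map (fun i => mk n c r (x + i)) := by
  simp [hwalk2, hwalk_support]

/-- vertical walk from row 0 up to row r. -/
def vwalk (x : ℕ) (hx : x < 3 * n) : (r : ℕ) → r ≤ c →
    (GridGraph (c + 1) (3 * n)).Walk (mk n c 0 x) (mk n c r x)
  | 0, _ => SimpleGraph.Walk.nil
  | r + 1, h => (vwalk x hx r (by omega)).concat (adj_v n c h hx)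

lemma vwalk_edges (x : ℕ) (hx : x < 3 * n) (r : ℕ) (hr : r ≤ c) :
    (vwalk n c x hx r hr).edges
      = (List.range r).map (fun i => s(mk n c i x, mk n c (i + 1) x)) := by
  induction r with
  | zero => simp [vwalk]
  | succ r ih => simp [vwalk, SimpleGraph.Walk.edges_concat, ih (by omega), List.range_succ]

lemma vwalk_support (x : ℕ) (hx : x < 3 * n) (r : ℕ) (hr : r ≤ c) :
    (vwalk n c x hx r hr).support
      = (List.range (r + 1)).map (fun i => mk n c i x) := by
  induction r with
  | zero => simp [vwalk, List.range_succ]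
  | succ r ih => simp [vwalk, SimpleGraph.Walk.support_concat, ih (by omega), List.range_succ]

/-- stub at vertex block w, to offset δ. -/
def stub (w : Fin n) : (δ : ℕ) → δ ≤ 2 →
    (GridGraph (c + 1) (3 * n)).Walk (mk n c 0 (3 * w + 1)) (mk n c 0 (3 * w + δ))
  | 0, _ => SimpleGraph.Walk.cons
      ((adj_h n c (Nat.zero_le c) (by have := w.isLt; omega)).symm) SimpleGraph.Walk.nil
  | 1, _ => SimpleGraph.Walk.nil
  | 2, _ => SimpleGraph.Walk.cons
      (adj_h n c (Nat.zero_le c) (by have := w.isLt; omega)) SimpleGraph.Walk.nil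
  | _ + 3, h => absurd h (by omega)

lemma stub_edges (w : Fin n) (δ : ℕ) (hδ : δ ≤ 2) :
    (stub n c w δ hδ).edges
      = if δ = 1 then [] else [s(mk n c 0 (3 * w + 1), mk n c 0 (3 * w + δ))] := by
  match δ, hδ with
  | 0, _ => simp [stub, Sym2.eq_swap]
  | 1, _ => simp [stub]
  | 2, _ => simp [stub]

lemma stub_support (w : Fin n) (δ : ℕ) (hδ : δ ≤ 2) :
    (stub n c w δ hδ).support
      = if δ = 1 then [mk n c 0 (3 * w + 1)]
        else [mk n c 0 (3 * w + 1), mk n c 0 (3 * w + δ)] := by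
  match δ, hδ with
  | 0, _ => simp [stub]
  | 1, _ => simp [stub]
  | 2, _ => simp [stub]

end Stmt16


namespace Stmt16C

variable {n c : ℕ} (E : Finset (Fin n × Fin n))

def Lset (w : Fin n) : Finset (Fin n × Fin n) := E.filter (fun q => q.2 = w)
def Rset (w : Fin n) : Finset (Fin n × Fin n) := E.filter (fun q => q.1 = w)
def lidx (p : Fin n × Fin n) : ℕ := ((Lset E p.2).filter (fun q => (q.1 : ℕ) < p.1)).card
def ridx (p : Fin n × Fin n) : ℕ := ((Rset E p.1).filter (fun q => (q.2 : ℕ) < p.2)).card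
def key (p : Fin n × Fin n) : ℕ := (p.1 : ℕ) * n + p.2
def ovl (p q : Fin n × Fin n) : Prop := (p.1 : ℕ) < q.2 ∧ (q.1 : ℕ) < p.2

variable (hdeg3 : ∀ w : Fin n, (Lset E w).card + (Rset E w).card ≤ 3)

section

lemma lidx_lt (p : Fin n × Fin n) (hp : p ∈ E) : lidx E p + 1 ≤ (Lset E p.2).card := by
  have h1 : (Lset E p.2).filter (fun q => (q.1 : ℕ) < p.1) ⊆ (Lset E p.2).erase p := by
    intro q hq
    simp only [Finset.mem_filter] at hq
    exact Finset.mem_erase.2 ⟨by rintro rfl; omega, hq.1⟩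
  have h2 : p ∈ Lset E p.2 := Finset.mem_filter.2 ⟨hp, rfl⟩
  have := Finset.card_le_card h1
  rw [Finset.card_erase_of_mem h2] at this
  have : 0 < (Lset E p.2).card := Finset.card_pos.2 ⟨p, h2⟩
  have := Finset.card_le_card h1
  rw [Finset.card_erase_of_mem h2] at this
  unfold lidx; omega

lemma ridx_lt (p : Fin n × Fin n) (hp : p ∈ E) : ridx E p + 1 ≤ (Rset E p.1).card := by
  have h1 : (Rset E p.1).filter (fun q => (q.2 : ℕ) < p.2) ⊆ (Rset E p.1).erase p := by
    intro q hq
    simp only [Finset.mem_filter] at hq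
    exact Finset.mem_erase.2 ⟨by rintro rfl; omega, hq.1⟩
  have h2 : p ∈ Rset E p.1 := Finset.mem_filter.2 ⟨hp, rfl⟩
  have hpos : 0 < (Rset E p.1).card := Finset.card_pos.2 ⟨p, h2⟩
  have := Finset.card_le_card h1
  rw [Finset.card_erase_of_mem h2] at this
  unfold ridx; omega

include hdeg3

lemma lidx_le2 (p : Fin n × Fin n) (hp : p ∈ E) : lidx E p ≤ 2 := by
  have := lidx_lt E p hp; have := hdeg3 p.2; omega

lemma ridx_le2 (p : Fin n × Fin n) (hp : p ∈ E) : ridx E p ≤ 2 := by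
  have := ridx_lt E p hp; have := hdeg3 p.1; omega

omit hdeg3

/-- left offsets are injective. -/
lemma lidx_inj (p q : Fin n × Fin n) (hp : p ∈ E) (hq : q ∈ E) (hw : p.2 = q.2)
    (h : lidx E p = lidx E q) : p = q := by
  rcases lt_trichotomy ((p.1 : ℕ)) ((q.1 : ℕ)) with hlt | heq | hlt
  · exfalso
    have hsub : (Lset E p.2).filter (fun r => (r.1 : ℕ) < p.1)
        ⊂ (Lset E q.2).filter (fun r => (r.1 : ℕ) < q.1) := by
      rw [← hw]
      refine Finset.ssubset_iff_of_subset (fun r hr => ?_) |>.2 ?_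
      · simp only [Finset.mem_filter] at hr ⊢; exact ⟨hr.1, by omega⟩
      · exact ⟨p, Finset.mem_filter.2 ⟨Finset.mem_filter.2 ⟨hp, rfl⟩, hlt⟩,
          by simp only [Finset.mem_filter]; omega⟩
    have := Finset.card_lt_card hsub
    unfold lidx at h; omega
  · have h1 : p.1 = q.1 := Fin.ext heq
    have h2 : p.2 = q.2 := hw
    exact Prod.ext h1 h2
  · exfalso
    have hsub : (Lset E q.2).filter (fun r => (r.1 : ℕ) < q.1)
        ⊂ (Lset E p.2).filter (fun r => (r.1 : ℕ) < p.1) := by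
      rw [hw]
      refine Finset.ssubset_iff_of_subset (fun r hr => ?_) |>.2 ?_
      · simp only [Finset.mem_filter] at hr ⊢; exact ⟨hr.1, by omega⟩
      · exact ⟨q, Finset.mem_filter.2 ⟨Finset.mem_filter.2 ⟨hq, rfl⟩, hlt⟩,
          by simp only [Finset.mem_filter]; omega⟩
    have := Finset.card_lt_card hsub
    unfold lidx at h; omega

lemma ridx_inj (p q : Fin n × Fin n) (hp : p ∈ E) (hq : q ∈ E) (hw : p.1 = q.1)
    (h : ridx E p = ridx E q) : p = q := by
  rcases lt_trichotomy ((p.2 : ℕ)) ((q.2 : ℕ)) with hlt | heq | hlt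
  · exfalso
    have hsub : (Rset E p.1).filter (fun r => (r.2 : ℕ) < p.2)
        ⊂ (Rset E q.1).filter (fun r => (r.2 : ℕ) < q.2) := by
      rw [← hw]
      refine Finset.ssubset_iff_of_subset (fun r hr => ?_) |>.2 ?_
      · simp only [Finset.mem_filter] at hr ⊢; exact ⟨hr.1, by omega⟩
      · exact ⟨p, Finset.mem_filter.2 ⟨Finset.mem_filter.2 ⟨hp, rfl⟩, hlt⟩,
          by simp only [Finset.mem_filter]; omega⟩
    have := Finset.card_lt_card hsub
    unfold ridx at h; omega
  · exact Prod.ext hw (Fin.ext heq)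
  · exfalso
    have hsub : (Rset E q.1).filter (fun r => (r.2 : ℕ) < q.2)
        ⊂ (Rset E p.1).filter (fun r => (r.2 : ℕ) < p.2) := by
      rw [hw]
      refine Finset.ssubset_iff_of_subset (fun r hr => ?_) |>.2 ?_
      · simp only [Finset.mem_filter] at hr ⊢; exact ⟨hr.1, by omega⟩
      · exact ⟨q, Finset.mem_filter.2 ⟨Finset.mem_filter.2 ⟨hq, rfl⟩, hlt⟩,
          by simp only [Finset.mem_filter]; omega⟩
    have := Finset.card_lt_card hsub
    unfold ridx at h; omega

include hdeg3

/-- left offset < right offset at a shared vertex. -/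
lemma lidx_lt_ridx (p q : Fin n × Fin n) (hp : p ∈ E) (hq : q ∈ E) (hw : p.2 = q.1) :
    lidx E p < 2 - ridx E q := by
  have h1 := lidx_lt E p hp
  have h2 := ridx_lt E q hq
  have h3 := hdeg3 q.1
  rw [hw] at h1
  omega

end


section Color

instance (p q : Fin n × Fin n) : Decidable (ovl p q) := by unfold ovl; infer_instance

noncomputable def col (E : Finset (Fin n × Fin n)) (p : Fin n × Fin n) : ℕ :=
  sInf {k | ∀ q, q ∈ E → ∀ _ : key q < key (n := n) p, ovl p q → col E q ≠ k}
termination_by key p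
decreasing_by assumption

lemma col_eq (p : Fin n × Fin n) :
    col E p = sInf {k | ∀ q, q ∈ E → key q < key (n := n) p → ovl p q → col E q ≠ k} := by
  rw [col]

lemma col_eq' (p : Fin n × Fin n) :
    col E p = sInf {k | k ∉ (E.filter (fun q => key q < key (n := n) p ∧ ovl p q)).image (col E)} := by
  rw [col_eq]
  apply congrArg sInf
  ext k
  simp only [Set.mem_setOf_eq, Finset.mem_image, Finset.mem_filter, not_exists, not_and]
  constructor
  · rintro h q ⟨hq, hlt, hov⟩
    exact h q hq hlt hov
  · intro h q hq hlt hov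
    exact h q ⟨hq, hlt, hov⟩

variable (hElt : ∀ p ∈ E, (p.1 : ℕ) < p.2)
  (hcross : ∀ i : ℕ, (E.filter (fun q => (q.1 : ℕ) ≤ i ∧ i < (q.2 : ℕ))).card ≤ c)

lemma key_lt_imp {p q : Fin n × Fin n} (h : key (n := n) q < key p) : (q.1 : ℕ) ≤ p.1 := by
  by_contra hc
  push_neg at hc
  have h2 : (q.2 : ℕ) < n := q.2.isLt
  have h3 : (p.1 : ℕ) + 1 ≤ q.1 := hc
  have : ((p.1 : ℕ) + 1) * n ≤ (q.1 : ℕ) * n := Nat.mul_le_mul_right n h3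
  unfold key at h
  nlinarith [p.2.isLt, q.2.isLt]

include hElt hcross

lemma col_lt (p : Fin n × Fin n) (hp : p ∈ E) : col E p < c ∧
    ∀ q, q ∈ E → key q < key (n := n) p → ovl p q → col E q ≠ col E p := by
  set F := (E.filter (fun q => key q < key (n := n) p ∧ ovl p q)).image (col E) with hF
  have hsub : E.filter (fun q => key q < key (n := n) p ∧ ovl p q)
      ⊆ (E.filter (fun q => (q.1 : ℕ) ≤ (p.1 : ℕ) ∧ (p.1 : ℕ) < (q.2 : ℕ))).erase p := by
    intro q hq
    simp only [Finset.mem_filter] at hq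
    refine Finset.mem_erase.2 ⟨?_, Finset.mem_filter.2 ⟨hq.1, key_lt_imp hq.2.1, hq.2.2.1⟩⟩
    rintro rfl
    exact absurd hq.2.1 (lt_irrefl _)
  have hpmem : p ∈ E.filter (fun q => (q.1 : ℕ) ≤ (p.1 : ℕ) ∧ (p.1 : ℕ) < (q.2 : ℕ)) :=
    Finset.mem_filter.2 ⟨hp, le_refl _, hElt p hp⟩
  have hc1 : (E.filter (fun q => (q.1 : ℕ) ≤ (p.1 : ℕ) ∧ (p.1 : ℕ) < (q.2 : ℕ))).card ≤ c :=
    hcross (p.1 : ℕ)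
  have hcard : F.card < c := by
    have h1 := Finset.card_le_card hsub
    rw [Finset.card_erase_of_mem hpmem] at h1
    have h2 := Finset.card_image_le (s := E.filter (fun q => key q < key (n := n) p ∧ ovl p q))
      (f := col E)
    rw [← hF] at h2
    have hpos : 0 < (E.filter (fun q => (q.1 : ℕ) ≤ (p.1 : ℕ) ∧ (p.1 : ℕ) < (q.2 : ℕ))).card :=
      Finset.card_pos.2 ⟨p, hpmem⟩
    omega
  -- find a color < c not in F
  have hex : ∃ k, k < c ∧ k ∉ F := by
    by_contra hc2
    push_neg at hc2
    have : Finset.range c ⊆ F := fun k hk => hc2 k (Finset.mem_range.1 hk)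
    have := Finset.card_le_card this
    simp [Finset.card_range] at this
    omega
  obtain ⟨k, hk, hkF⟩ := hex
  have hSne : k ∈ {m | m ∉ F} := hkF
  have h1 : col E p ≤ k := by rw [col_eq' E p, ← hF]; exact Nat.sInf_le hSne
  have h2 : col E p ∈ {m | m ∉ F} := by
    rw [col_eq' E p, ← hF]; exact Nat.sInf_mem ⟨k, hSne⟩
  constructor
  · omega
  · intro q hq hlt hov heq
    apply h2
    exact Finset.mem_image.2 ⟨q, Finset.mem_filter.2 ⟨hq, hlt, hov⟩, heq⟩

omit hElt hcross in
lemma key_inj {p q : Fin n × Fin n} (h : key (n := n) p = key q) : p = q := by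
  have h1 : (p.1 : ℕ) = q.1 := by
    rcases lt_trichotomy ((p.1 : ℕ)) ((q.1 : ℕ)) with hlt | he | hlt
    · exfalso
      have : ((p.1 : ℕ) + 1) * n ≤ (q.1 : ℕ) * n := Nat.mul_le_mul_right n hlt
      unfold key at h; nlinarith [p.2.isLt, q.2.isLt]
    · exact he
    · exfalso
      have : ((q.1 : ℕ) + 1) * n ≤ (p.1 : ℕ) * n := Nat.mul_le_mul_right n hlt
      unfold key at h; nlinarith [p.2.isLt, q.2.isLt]
  have h2 : (p.2 : ℕ) = q.2 := by unfold key at h; rw [h1] at h; omega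
  exact Prod.ext (Fin.ext h1) (Fin.ext h2)

/-- distinct overlapping edges get distinct colors -/
lemma col_ne (p q : Fin n × Fin n) (hp : p ∈ E) (hq : q ∈ E) (hne : p ≠ q)
    (hov : ovl p q) : col E p ≠ col E q := by
  rcases lt_trichotomy (key (n := n) q) (key p) with hlt | he | hlt
  · exact fun h => (col_lt E hElt hcross p hp).2 q hq hlt hov h.symm
  · exact absurd (key_inj he).symm hne
  · exact fun h => (col_lt E hElt hcross q hq).2 p hp hlt ⟨hov.2, hov.1⟩ h

end Color

end Stmt16C

namespace Stmt16

open SimpleGraph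

variable (n c : ℕ) [NeZero n]

def Wd (r δa δb : ℕ) (a b : Fin n) (hr : r ≤ c) (hδa : δa ≤ 2) (hδb : δb ≤ 2)
    (hab : (a : ℕ) < b) :
    (GridGraph (c + 1) (3 * n)).Walk (mk n c 0 (3 * ↑a + 1)) (mk n c 0 (3 * ↑b + 1)) :=
  (stub n c a δa hδa).append
    ((vwalk n c (3 * ↑a + δa) (by have := a.isLt; omega) r hr).append
      ((hwalk2 n c r (3 * ↑a + δa) (3 * ↑b + δb) hr (by have := b.isLt; omega)
          (by omega)).append
        ((vwalk n c (3 * ↑b + δb) (by have := b.isLt; omega) r hr).reverse.append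
          (stub n c b δb hδb).reverse)))

lemma Wd_edges_mem {r δa δb : ℕ} {a b : Fin n} {hr : r ≤ c} {hδa : δa ≤ 2} {hδb : δb ≤ 2}
    {hab : (a : ℕ) < b} {ge} (h : ge ∈ (Wd n c r δa δb a b hr hδa hδb hab).edges) :
    (δa ≠ 1 ∧ ge = s(mk n c 0 (3 * ↑a + 1), mk n c 0 (3 * ↑a + δa)))
    ∨ (∃ i, i < r ∧ ge = s(mk n c i (3 * ↑a + δa), mk n c (i + 1) (3 * ↑a + δa)))
    ∨ (∃ x, 3 * ↑a + δa ≤ x ∧ x < 3 * ↑b + δb ∧ ge = s(mk n c r x, mk n c r (x + 1)))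
    ∨ (∃ i, i < r ∧ ge = s(mk n c i (3 * ↑b + δb), mk n c (i + 1) (3 * ↑b + δb)))
    ∨ (δb ≠ 1 ∧ ge = s(mk n c 0 (3 * ↑b + 1), mk n c 0 (3 * ↑b + δb))) := by
  simp only [Wd, Walk.edges_append, Walk.edges_reverse, List.mem_append, List.mem_reverse,
    stub_edges, vwalk_edges, hwalk2_edges, List.mem_map, List.mem_range] at h
  rcases h with (h | h | h | h | h)
  · left
    split at h
    · simp at h
    · simp at h; exact ⟨by assumption, h⟩
  · obtain ⟨i, hi, rfl⟩ := h
    exact Or.inr (Or.inl ⟨i, hi, rfl⟩)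
  · obtain ⟨i, hi, rfl⟩ := h
    exact Or.inr (Or.inr (Or.inl ⟨3 * ↑a + δa + i, by omega, by omega, rfl⟩))
  · obtain ⟨i, hi, rfl⟩ := h
    exact Or.inr (Or.inr (Or.inr (Or.inl ⟨i, hi, rfl⟩)))
  · right; right; right; right
    split at h
    · simp at h
    · simp at h; exact ⟨by assumption, h⟩

lemma Wd_support_mem {r δa δb : ℕ} {a b : Fin n} {hr : r ≤ c} {hδa : δa ≤ 2} {hδb : δb ≤ 2}
    {hab : (a : ℕ) < b} {x} (h : x ∈ (Wd n c r δa δb a b hr hδa hδb hab).support) :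
    x = mk n c 0 (3 * ↑a + 1)
    ∨ (∃ i, i ≤ r ∧ x = mk n c i (3 * ↑a + δa))
    ∨ (∃ y, 3 * ↑a + δa ≤ y ∧ y ≤ 3 * ↑b + δb ∧ x = mk n c r y)
    ∨ (∃ i, i ≤ r ∧ x = mk n c i (3 * ↑b + δb))
    ∨ x = mk n c 0 (3 * ↑b + 1) := by
  simp only [Wd, Walk.support_append] at h
  rcases List.mem_append.1 h with h | h
  · rw [stub_support] at h
    split at h
    · simp at h; left; exact h
    · simp at h
      rcases h with h | h
      · left; exact h
      · exact Or.inr (Or.inl ⟨0, by omega, h⟩)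
  · rcases List.mem_append.1 (List.mem_of_mem_tail h) with h | h
    · rw [vwalk_support] at h
      simp only [List.mem_map, List.mem_range] at h
      obtain ⟨i, hi, rfl⟩ := h
      exact Or.inr (Or.inl ⟨i, by omega, rfl⟩)
    · rcases List.mem_append.1 (List.mem_of_mem_tail h) with h | h
      · rw [hwalk2_support] at h
        simp only [List.mem_map, List.mem_range] at h
        obtain ⟨i, hi, rfl⟩ := h
        exact Or.inr (Or.inr (Or.inl ⟨3 * ↑a + δa + i, by omega, by omega, rfl⟩))
      · rcases List.mem_append.1 (List.mem_of_mem_tail h) with h | h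
        · rw [Walk.support_reverse, vwalk_support] at h
          simp only [List.mem_reverse, List.mem_map, List.mem_range] at h
          obtain ⟨i, hi, rfl⟩ := h
          exact Or.inr (Or.inr (Or.inr (Or.inl ⟨i, by omega, rfl⟩)))
        · have h' := List.mem_of_mem_tail h
          rw [Walk.support_reverse, List.mem_reverse, stub_support] at h'
          split at h'
          · simp at h'; right; right; right; right; exact h'
          · simp at h'
            rcases h' with h' | h'
            · right; right; right; right; exact h'
            · exact Or.inr (Or.inr (Or.inr (Or.inl ⟨0, by omega, h'⟩)))

lemma mk_sym2_eq {r1 x1 r2 x2 r3 x3 r4 x4 : ℕ}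
    (hr1 : r1 ≤ c) (hr2 : r2 ≤ c) (hr3 : r3 ≤ c) (hr4 : r4 ≤ c)
    (hx1 : x1 < 3 * n) (hx2 : x2 < 3 * n) (hx3 : x3 < 3 * n) (hx4 : x4 < 3 * n)
    (h : s(mk n c r1 x1, mk n c r2 x2) = s(mk n c r3 x3, mk n c r4 x4)) :
    (r1 = r3 ∧ x1 = x3 ∧ r2 = r4 ∧ x2 = x4) ∨ (r1 = r4 ∧ x1 = x4 ∧ r2 = r3 ∧ x2 = x3) := by
  rw [Sym2.eq_iff] at h
  rcases h with ⟨h1, h2⟩ | ⟨h1, h2⟩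
  · obtain ⟨e1, e2⟩ := mk_inj n c hr1 hx1 hr3 hx3 h1
    obtain ⟨e3, e4⟩ := mk_inj n c hr2 hx2 hr4 hx4 h2
    exact Or.inl ⟨e1, e2, e3, e4⟩
  · obtain ⟨e1, e2⟩ := mk_inj n c hr1 hx1 hr4 hx4 h1
    obtain ⟨e3, e4⟩ := mk_inj n c hr2 hx2 hr3 hx3 h2
    exact Or.inr ⟨e1, e2, e3, e4⟩

end Stmt16


namespace Stmt16

open SimpleGraph Stmt16C

variable (n c : ℕ) [NeZero n] (E : Finset (Fin n × Fin n))
  (hElt : ∀ p ∈ E, (p.1 : ℕ) < p.2)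
  (hdeg3 : ∀ w : Fin n, (Lset E w).card + (Rset E w).card ≤ 3)
  (hcross : ∀ i : ℕ, (E.filter (fun q => (q.1 : ℕ) ≤ i ∧ i < (q.2 : ℕ))).card ≤ c)

noncomputable def WE (p : Fin n × Fin n) (hp : p ∈ E) :
    (GridGraph (c + 1) (3 * n)).Walk (mk n c 0 (3 * ↑p.1 + 1)) (mk n c 0 (3 * ↑p.2 + 1)) :=
  Wd n c (col E p + 1) (2 - ridx E p) (lidx E p) p.1 p.2
    (by have := (col_lt E hElt hcross p hp).1; omega)
    (by omega)
    (lidx_le2 E hdeg3 p hp)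
    (hElt p hp)

include hElt hdeg3 hcross

lemma same_cu {p q : Fin n × Fin n} (hp : p ∈ E) (hq : q ∈ E) (hne : p ≠ q)
    (h : 3 * (p.1 : ℕ) + (2 - ridx E p) = 3 * (q.1 : ℕ) + (2 - ridx E q)) : False := by
  have h1 := ridx_le2 E hdeg3 p hp
  have h2 := ridx_le2 E hdeg3 q hq
  have h3 : (p.1 : ℕ) = q.1 := by omega
  have h4 : ridx E p = ridx E q := by omega
  exact hne (ridx_inj E p q hp hq (Fin.ext h3) h4)

lemma same_cv {p q : Fin n × Fin n} (hp : p ∈ E) (hq : q ∈ E) (hne : p ≠ q)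
    (h : 3 * (p.2 : ℕ) + lidx E p = 3 * (q.2 : ℕ) + lidx E q) : False := by
  have h1 := lidx_le2 E hdeg3 p hp
  have h2 := lidx_le2 E hdeg3 q hq
  have h3 : (p.2 : ℕ) = q.2 := by omega
  have h4 : lidx E p = lidx E q := by omega
  exact hne (lidx_inj E p q hp hq (Fin.ext h3) h4)

lemma cu_cv {p q : Fin n × Fin n} (hp : p ∈ E) (hq : q ∈ E)
    (h : 3 * (p.1 : ℕ) + (2 - ridx E p) = 3 * (q.2 : ℕ) + lidx E q) : False := by
  have h1 := ridx_le2 E hdeg3 p hp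
  have h2 := lidx_le2 E hdeg3 q hq
  have h3 : (q.2 : ℕ) = p.1 := by omega
  have h4 := lidx_lt_ridx E hdeg3 q p hq hp (Fin.ext h3)
  omega

end Stmt16


namespace Stmt16

open SimpleGraph Stmt16C

variable (n c : ℕ) [NeZero n] (E : Finset (Fin n × Fin n))
  (hElt : ∀ p ∈ E, (p.1 : ℕ) < p.2)
  (hdeg3 : ∀ w : Fin n, (Lset E w).card + (Rset E w).card ≤ 3)
  (hcross : ∀ i : ℕ, (E.filter (fun q => (q.1 : ℕ) ≤ i ∧ i < (q.2 : ℕ))).card ≤ c)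

include hElt hdeg3 hcross

lemma WE_disjoint (p q : Fin n × Fin n) (hp : p ∈ E) (hq : q ∈ E) (hne : p ≠ q) (ge)
    (hA : ge ∈ (WE n c E hElt hdeg3 hcross p hp).edges)
    (hB : ge ∈ (WE n c E hElt hdeg3 hcross q hq).edges) : False := by
  unfold WE at hA hB
  have FA := Wd_edges_mem n c hA
  have FB := Wd_edges_mem n c hB
  have hab1 : (p.1 : ℕ) < p.2 := hElt p hp
  have hab2 : (q.1 : ℕ) < q.2 := hElt q hq
  have hn1 : (p.2 : ℕ) < n := p.2.isLt
  have hn2 : (q.2 : ℕ) < n := q.2.isLt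
  have hrp : col E p + 1 ≤ c := by have := (col_lt E hElt hcross p hp).1; omega
  have hrq : col E q + 1 ≤ c := by have := (col_lt E hElt hcross q hq).1; omega
  have hlp : lidx E p ≤ 2 := lidx_le2 E hdeg3 p hp
  have hlq : lidx E q ≤ 2 := lidx_le2 E hdeg3 q hq
  rcases FA with ⟨hd1, he1⟩ | ⟨i, hi, he1⟩ | ⟨x, hx1, hx2, he1⟩ | ⟨i, hi, he1⟩ | ⟨hd1, he1⟩
  · rcases FB with ⟨hd2, he2⟩ | ⟨j, hj, he2⟩ | ⟨y, hy1, hy2, he2⟩ | ⟨j, hj, he2⟩ | ⟨hd2, he2⟩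
    · rcases mk_sym2_eq n c (by omega) (by omega) (by omega) (by omega) (by omega) (by omega)
        (by omega) (by omega) (he1.symm.trans he2) with ⟨e1, e2, e3, e4⟩ | ⟨e1, e2, e3, e4⟩
      · exact same_cu n c E hElt hdeg3 hcross hp hq hne e4
      · omega
    · rcases mk_sym2_eq n c (by omega) (by omega) (by omega) (by omega) (by omega) (by omega)
        (by omega) (by omega) (he1.symm.trans he2) with ⟨e1, e2, e3, e4⟩ | ⟨e1, e2, e3, e4⟩
        <;> omega
    · rcases mk_sym2_eq n c (by omega) (by omega) (by omega) (by omega) (by omega) (by omega)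
        (by omega) (by omega) (he1.symm.trans he2) with ⟨e1, e2, e3, e4⟩ | ⟨e1, e2, e3, e4⟩
        <;> omega
    · rcases mk_sym2_eq n c (by omega) (by omega) (by omega) (by omega) (by omega) (by omega)
        (by omega) (by omega) (he1.symm.trans he2) with ⟨e1, e2, e3, e4⟩ | ⟨e1, e2, e3, e4⟩
        <;> omega
    · rcases mk_sym2_eq n c (by omega) (by omega) (by omega) (by omega) (by omega) (by omega)
        (by omega) (by omega) (he1.symm.trans he2) with ⟨e1, e2, e3, e4⟩ | ⟨e1, e2, e3, e4⟩
      · exact cu_cv n c E hElt hdeg3 hcross hp hq e4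
      · omega
  · rcases FB with ⟨hd2, he2⟩ | ⟨j, hj, he2⟩ | ⟨y, hy1, hy2, he2⟩ | ⟨j, hj, he2⟩ | ⟨hd2, he2⟩
    · rcases mk_sym2_eq n c (by omega) (by omega) (by omega) (by omega) (by omega) (by omega)
        (by omega) (by omega) (he1.symm.trans he2) with ⟨e1, e2, e3, e4⟩ | ⟨e1, e2, e3, e4⟩
        <;> omega
    · rcases mk_sym2_eq n c (by omega) (by omega) (by omega) (by omega) (by omega) (by omega)
        (by omega) (by omega) (he1.symm.trans he2) with ⟨e1, e2, e3, e4⟩ | ⟨e1, e2, e3, e4⟩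
        <;> exact same_cu n c E hElt hdeg3 hcross hp hq hne e2
    · rcases mk_sym2_eq n c (by omega) (by omega) (by omega) (by omega) (by omega) (by omega)
        (by omega) (by omega) (he1.symm.trans he2) with ⟨e1, e2, e3, e4⟩ | ⟨e1, e2, e3, e4⟩
        <;> omega
    · rcases mk_sym2_eq n c (by omega) (by omega) (by omega) (by omega) (by omega) (by omega)
        (by omega) (by omega) (he1.symm.trans he2) with ⟨e1, e2, e3, e4⟩ | ⟨e1, e2, e3, e4⟩
        <;> exact cu_cv n c E hElt hdeg3 hcross hp hq e2
    · rcases mk_sym2_eq n c (by omega) (by omega) (by omega) (by omega) (by omega) (by omega)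
        (by omega) (by omega) (he1.symm.trans he2) with ⟨e1, e2, e3, e4⟩ | ⟨e1, e2, e3, e4⟩
        <;> omega
  · rcases FB with ⟨hd2, he2⟩ | ⟨j, hj, he2⟩ | ⟨y, hy1, hy2, he2⟩ | ⟨j, hj, he2⟩ | ⟨hd2, he2⟩
    · rcases mk_sym2_eq n c (by omega) (by omega) (by omega) (by omega) (by omega) (by omega)
        (by omega) (by omega) (he1.symm.trans he2) with ⟨e1, e2, e3, e4⟩ | ⟨e1, e2, e3, e4⟩
        <;> omega
    · rcases mk_sym2_eq n c (by omega) (by omega) (by omega) (by omega) (by omega) (by omega)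
        (by omega) (by omega) (he1.symm.trans he2) with ⟨e1, e2, e3, e4⟩ | ⟨e1, e2, e3, e4⟩
        <;> omega
    · rcases mk_sym2_eq n c (by omega) (by omega) (by omega) (by omega) (by omega) (by omega)
        (by omega) (by omega) (he1.symm.trans he2) with ⟨e1, e2, e3, e4⟩ | ⟨e1, e2, e3, e4⟩
      · have hcc : col E p = col E q := by omega
        have hno : (q.2 : ℕ) ≤ p.1 ∨ (p.2 : ℕ) ≤ q.1 := by
          by_contra hcon
          push_neg at hcon
          exact col_ne E hElt hcross p q hp hq hne ⟨by omega, by omega⟩ hcc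
        rcases hno with hle | hle
        · rcases eq_or_lt_of_le hle with heb | hlt2
          · have := lidx_lt_ridx E hdeg3 q p hq hp (Fin.ext heb)
            omega
          · omega
        · rcases eq_or_lt_of_le hle with heb | hlt2
          · have := lidx_lt_ridx E hdeg3 p q hp hq (Fin.ext heb)
            omega
          · omega
      · omega
    · rcases mk_sym2_eq n c (by omega) (by omega) (by omega) (by omega) (by omega) (by omega)
        (by omega) (by omega) (he1.symm.trans he2) with ⟨e1, e2, e3, e4⟩ | ⟨e1, e2, e3, e4⟩
        <;> omega
    · rcases mk_sym2_eq n c (by omega) (by omega) (by omega) (by omega) (by omega) (by omega)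
        (by omega) (by omega) (he1.symm.trans he2) with ⟨e1, e2, e3, e4⟩ | ⟨e1, e2, e3, e4⟩
        <;> omega
  · rcases FB with ⟨hd2, he2⟩ | ⟨j, hj, he2⟩ | ⟨y, hy1, hy2, he2⟩ | ⟨j, hj, he2⟩ | ⟨hd2, he2⟩
    · rcases mk_sym2_eq n c (by omega) (by omega) (by omega) (by omega) (by omega) (by omega)
        (by omega) (by omega) (he1.symm.trans he2) with ⟨e1, e2, e3, e4⟩ | ⟨e1, e2, e3, e4⟩
        <;> omega
    · rcases mk_sym2_eq n c (by omega) (by omega) (by omega) (by omega) (by omega) (by omega)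
        (by omega) (by omega) (he1.symm.trans he2) with ⟨e1, e2, e3, e4⟩ | ⟨e1, e2, e3, e4⟩
        <;> exact cu_cv n c E hElt hdeg3 hcross hq hp e2.symm
    · rcases mk_sym2_eq n c (by omega) (by omega) (by omega) (by omega) (by omega) (by omega)
        (by omega) (by omega) (he1.symm.trans he2) with ⟨e1, e2, e3, e4⟩ | ⟨e1, e2, e3, e4⟩
        <;> omega
    · rcases mk_sym2_eq n c (by omega) (by omega) (by omega) (by omega) (by omega) (by omega)
        (by omega) (by omega) (he1.symm.trans he2) with ⟨e1, e2, e3, e4⟩ | ⟨e1, e2, e3, e4⟩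
        <;> exact same_cv n c E hElt hdeg3 hcross hp hq hne e2
    · rcases mk_sym2_eq n c (by omega) (by omega) (by omega) (by omega) (by omega) (by omega)
        (by omega) (by omega) (he1.symm.trans he2) with ⟨e1, e2, e3, e4⟩ | ⟨e1, e2, e3, e4⟩
        <;> omega
  · rcases FB with ⟨hd2, he2⟩ | ⟨j, hj, he2⟩ | ⟨y, hy1, hy2, he2⟩ | ⟨j, hj, he2⟩ | ⟨hd2, he2⟩
    · rcases mk_sym2_eq n c (by omega) (by omega) (by omega) (by omega) (by omega) (by omega)
        (by omega) (by omega) (he1.symm.trans he2) with ⟨e1, e2, e3, e4⟩ | ⟨e1, e2, e3, e4⟩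
      · exact cu_cv n c E hElt hdeg3 hcross hq hp e4.symm
      · omega
    · rcases mk_sym2_eq n c (by omega) (by omega) (by omega) (by omega) (by omega) (by omega)
        (by omega) (by omega) (he1.symm.trans he2) with ⟨e1, e2, e3, e4⟩ | ⟨e1, e2, e3, e4⟩
        <;> omega
    · rcases mk_sym2_eq n c (by omega) (by omega) (by omega) (by omega) (by omega) (by omega)
        (by omega) (by omega) (he1.symm.trans he2) with ⟨e1, e2, e3, e4⟩ | ⟨e1, e2, e3, e4⟩
        <;> omega
    · rcases mk_sym2_eq n c (by omega) (by omega) (by omega) (by omega) (by omega) (by omega)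
        (by omega) (by omega) (he1.symm.trans he2) with ⟨e1, e2, e3, e4⟩ | ⟨e1, e2, e3, e4⟩
        <;> omega
    · rcases mk_sym2_eq n c (by omega) (by omega) (by omega) (by omega) (by omega) (by omega)
        (by omega) (by omega) (he1.symm.trans he2) with ⟨e1, e2, e3, e4⟩ | ⟨e1, e2, e3, e4⟩
      · exact same_cv n c E hElt hdeg3 hcross hp hq hne e4
      · omega

end Stmt16


namespace Stmt16

open SimpleGraph Stmt16C

variable (n c : ℕ) [NeZero n] (E : Finset (Fin n × Fin n))
  (hElt : ∀ p ∈ E, (p.1 : ℕ) < p.2)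
  (hdeg3 : ∀ w : Fin n, (Lset E w).card + (Rset E w).card ≤ 3)
  (hcross : ∀ i : ℕ, (E.filter (fun q => (q.1 : ℕ) ≤ i ∧ i < (q.2 : ℕ))).card ≤ c)

include hElt hdeg3 hcross

lemma WE_support_mem (p : Fin n × Fin n) (hp : p ∈ E) (x)
    (hx : x ∈ (WE n c E hElt hdeg3 hcross p hp).support)
    (h1 : x ≠ mk n c 0 (3 * ↑p.1 + 1)) (h2 : x ≠ mk n c 0 (3 * ↑p.2 + 1)) (w : Fin n) :
    x ≠ mk n c 0 (3 * ↑w + 1) := by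
  intro hxw
  unfold WE at hx
  have F := Wd_support_mem n c hx
  have hab1 : (p.1 : ℕ) < p.2 := hElt p hp
  have hn1 : (p.2 : ℕ) < n := p.2.isLt
  have hw1 : (w : ℕ) < n := w.isLt
  have hrp : col E p + 1 ≤ c := by have := (col_lt E hElt hcross p hp).1; omega
  have hlp : lidx E p ≤ 2 := lidx_le2 E hdeg3 p hp
  rcases F with hF | ⟨i, hi, hF⟩ | ⟨y, hy1, hy2, hF⟩ | ⟨i, hi, hF⟩ | hF
  · exact h1 hF
  · obtain ⟨e1, e2⟩ := mk_inj n c (by omega) (by omega) (by omega) (by omega)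
      (hF.symm.trans hxw)
    have e3 : 2 - ridx E p = 1 := by omega
    exact h1 (hF.trans (by rw [show i = 0 from e1, e3]))
  · obtain ⟨e1, e2⟩ := mk_inj n c (by omega) (by omega) (by omega) (by omega)
      (hF.symm.trans hxw)
    omega
  · obtain ⟨e1, e2⟩ := mk_inj n c (by omega) (by omega) (by omega) (by omega)
      (hF.symm.trans hxw)
    have e3 : lidx E p = 1 := by omega
    exact h2 (hF.trans (by rw [show i = 0 from e1, e3]))
  · exact h2 hF

end Stmt16

theorem stmt16 {V : Type} [Fintype V] [DecidableEq V] (G : SimpleGraph V)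
    [DecidableRel G.Adj] (c : ℕ)
    (hdeg : ∀ v, G.degree v ≤ 3) (hcw : CutwidthAtMost G c) :
    ∃ (φ : V → Fin (c + 1) × Fin (3 * Fintype.card V))
      (P : ∀ u v : V, G.Adj u v →
        (GridGraph (c + 1) (3 * Fintype.card V)).Walk (φ u) (φ v)),
      Function.Injective φ ∧
      (∀ u v (h : G.Adj u v), (P u v h).IsPath) ∧
      (∀ u v (h : G.Adj u v) u' v' (h' : G.Adj u' v'),
        s(u, v) ≠ s(u', v') →
        ∀ e ∈ (P u v h).edges, e ∉ (P u' v' h').edges) ∧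
      (∀ u v (h : G.Adj u v), ∀ x ∈ (P u v h).support,
        x ≠ φ u → x ≠ φ v → x ∉ Set.range φ) := by
  classical
  by_cases hn : Fintype.card V = 0
  · haveI : IsEmpty V := Fintype.card_eq_zero_iff.mp hn
    exact ⟨fun v => isEmptyElim v, fun u v h => isEmptyElim u,
      fun a b => isEmptyElim a, fun u => isEmptyElim u, fun u => isEmptyElim u,
      fun u => isEmptyElim u⟩
  · haveI : NeZero (Fintype.card V) := ⟨hn⟩
    obtain ⟨f, hf⟩ := hcw
    set E : Finset (Fin (Fintype.card V) × Fin (Fintype.card V)) := Finset.univ.filter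
      (fun p : Fin (Fintype.card V) × Fin (Fintype.card V) => (p.1 : ℕ) < (p.2 : ℕ) ∧ G.Adj (f.symm p.1) (f.symm p.2))
      with hEdef
    have hElt : ∀ p ∈ E, (p.1 : ℕ) < p.2 := fun p hp => (Finset.mem_filter.1 hp).2.1
    have hadj : ∀ p ∈ E, G.Adj (f.symm p.1) (f.symm p.2) :=
      fun p hp => (Finset.mem_filter.1 hp).2.2
    have hdeg3 : ∀ w : Fin (Fintype.card V), (Stmt16C.Lset E w).card + (Stmt16C.Rset E w).card ≤ 3 := by
      intro w
      have hdisj : Disjoint (Stmt16C.Lset E w) (Stmt16C.Rset E w) := by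
        rw [Finset.disjoint_left]
        intro p hpL hpR
        simp only [Stmt16C.Lset, Stmt16C.Rset, Finset.mem_filter] at hpL hpR
        have h1 := hElt p hpL.1
        have e : p.1 = p.2 := hpR.2.trans hpL.2.symm
        rw [e] at h1
        exact lt_irrefl _ h1
      rw [← Finset.card_union_of_disjoint hdisj]
      have hsub : ∀ p ∈ Stmt16C.Lset E w ∪ Stmt16C.Rset E w,
          (if p.2 = w then f.symm p.1 else f.symm p.2) ∈ G.neighborFinset (f.symm w) := by
        intro p hp
        simp only [Finset.mem_union, Stmt16C.Lset, Stmt16C.Rset, Finset.mem_filter] at hp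
        have hpE : p ∈ E := by rcases hp with h | h <;> exact h.1
        have hA := hadj p hpE
        by_cases h2 : p.2 = w
        · rw [if_pos h2, SimpleGraph.mem_neighborFinset]
          rw [h2] at hA
          exact hA.symm
        · have h1 : p.1 = w := (hp.resolve_left (fun hh => h2 hh.2)).2
          rw [if_neg h2, SimpleGraph.mem_neighborFinset]
          rw [h1] at hA
          exact hA
      have hinj : Set.InjOn (fun p : Fin (Fintype.card V) × Fin (Fintype.card V) => if p.2 = w then f.symm p.1 else f.symm p.2)
          ↑(Stmt16C.Lset E w ∪ Stmt16C.Rset E w) := by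
        intro p hp q hq he
        simp only [Finset.coe_union, Set.mem_union, Finset.mem_coe, Stmt16C.Lset, Stmt16C.Rset,
          Finset.mem_filter] at hp hq
        simp only [] at he
        have hpE : p ∈ E := by rcases hp with h | h <;> exact h.1
        have hqE : q ∈ E := by rcases hq with h | h <;> exact h.1
        by_cases h2p : p.2 = w <;> by_cases h2q : q.2 = w
        · rw [if_pos h2p, if_pos h2q] at he
          exact Prod.ext (f.symm.injective he) (h2p.trans h2q.symm)
        · have h1q : q.1 = w := (hq.resolve_left (fun hh => h2q hh.2)).2
          rw [if_pos h2p, if_neg h2q] at he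
          have e1 : p.1 = q.2 := f.symm.injective he
          have l1 := hElt p hpE
          have l2 := hElt q hqE
          rw [e1, h2p, ← h1q] at l1
          omega
        · have h1p : p.1 = w := (hp.resolve_left (fun hh => h2p hh.2)).2
          rw [if_neg h2p, if_pos h2q] at he
          have e1 : p.2 = q.1 := f.symm.injective he
          have l1 := hElt p hpE
          have l2 := hElt q hqE
          rw [← e1, h2q, ← h1p] at l2
          omega
        · have h1p : p.1 = w := (hp.resolve_left (fun hh => h2p hh.2)).2
          have h1q : q.1 = w := (hq.resolve_left (fun hh => h2q hh.2)).2
          rw [if_neg h2p, if_neg h2q] at he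
          exact Prod.ext (h1p.trans h1q.symm) (f.symm.injective he)
      calc (Stmt16C.Lset E w ∪ Stmt16C.Rset E w).card
          ≤ (G.neighborFinset (f.symm w)).card := Finset.card_le_card_of_injOn _ hsub hinj
        _ ≤ 3 := hdeg _
    have hcrossE : ∀ i : ℕ,
        (E.filter (fun q => (q.1 : ℕ) ≤ i ∧ i < (q.2 : ℕ))).card ≤ c := by
      intro i
      set F := E.filter (fun q => (q.1 : ℕ) ≤ i ∧ i < (q.2 : ℕ)) with hFdef
      set g : Fin (Fintype.card V) × Fin (Fintype.card V) → Sym2 V := fun p => s(f.symm p.1, f.symm p.2) with hgdef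
      have hinj : Set.InjOn g ↑F := by
        intro p hp q hq he
        simp only [Finset.mem_coe, hFdef, Finset.mem_filter] at hp hq
        rw [hgdef] at he
        simp only [Sym2.eq_iff] at he
        rcases he with ⟨h1, h2⟩ | ⟨h1, h2⟩
        · exact Prod.ext (f.symm.injective h1) (f.symm.injective h2)
        · have e1 : p.1 = q.2 := f.symm.injective h1
          have e2 : p.2 = q.1 := f.symm.injective h2
          have l1 := hElt p hp.1
          have l2 := hElt q hq.1
          rw [e1, e2] at l1
          omega
      have hsub : ((F.image g : Finset (Sym2 V)) : Set (Sym2 V))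
          ⊆ {e ∈ G.edgeSet | ∃ u v : V, e = s(u, v) ∧ (f u : ℕ) ≤ i ∧ i < (f v : ℕ)} := by
        intro e he
        simp only [Finset.coe_image, Set.mem_image, Finset.mem_coe, hFdef,
          Finset.mem_filter] at he
        obtain ⟨p, ⟨hpE, hp1, hp2⟩, rfl⟩ := he
        refine ⟨(hadj p hpE : _), f.symm p.1, f.symm p.2, rfl, ?_, ?_⟩
        · rw [Equiv.apply_symm_apply]; exact hp1
        · rw [Equiv.apply_symm_apply]; exact hp2
      calc F.card = (F.image g).card := (Finset.card_image_of_injOn hinj).symm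
        _ = ((F.image g : Finset (Sym2 V)) : Set (Sym2 V)).ncard :=
            (Set.ncard_coe_finset _).symm
        _ ≤ Set.ncard {e ∈ G.edgeSet | ∃ u v : V, e = s(u, v) ∧ (f u : ℕ) ≤ i ∧ i < (f v : ℕ)} :=
            Set.ncard_le_ncard hsub (Set.toFinite _)
        _ ≤ c := hf i
    have hmem : ∀ u v : V, G.Adj u v → ((f u : ℕ) < (f v : ℕ)) → (f u, f v) ∈ E := by
      intro u v h hlt
      refine Finset.mem_filter.2 ⟨Finset.mem_univ _, hlt, ?_⟩
      simpa using h
    have hval : ∀ {u v : V}, u ≠ v → ((f u : ℕ) ≠ (f v : ℕ)) := by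
      intro u v hne he
      exact hne (f.injective (Fin.ext he))
    refine ⟨fun v => Stmt16.mk (Fintype.card V) c 0 (3 * (f v : ℕ) + 1),
      fun u v h =>
        if hlt : (f u : ℕ) < (f v : ℕ) then
          (Stmt16.WE (Fintype.card V) c E hElt hdeg3 hcrossE (f u, f v) (hmem u v h hlt)).toPath.1
        else
          ((Stmt16.WE (Fintype.card V) c E hElt hdeg3 hcrossE (f v, f u)
            (hmem v u h.symm (by have := hval h.ne; omega))).toPath.1).reverse,
      ?_, ?_, ?_, ?_⟩
    · intro u v h
      have hb1 : 3 * (f u : ℕ) + 1 < 3 * (Fintype.card V) := by have := (f u).isLt; omega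
      have hb2 : 3 * (f v : ℕ) + 1 < 3 * (Fintype.card V) := by have := (f v).isLt; omega
      obtain ⟨-, h2⟩ := Stmt16.mk_inj (Fintype.card V) c (by omega) hb1 (by omega) hb2 h
      exact f.injective (Fin.ext (by omega))
    · intro u v h
      dsimp only
      split
      · exact (Stmt16.WE (Fintype.card V) c E hElt hdeg3 hcrossE _ _).toPath.2
      · exact ((Stmt16.WE (Fintype.card V) c E hElt hdeg3 hcrossE _ _).toPath.2).reverse
    · intro u v h u' v' h' hsne e he1 he2
      dsimp only at he1 he2
      have key : ∀ (p q : Fin (Fintype.card V) × Fin (Fintype.card V)) (hp : p ∈ E) (hq : q ∈ E), p ≠ q →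
          e ∈ (Stmt16.WE (Fintype.card V) c E hElt hdeg3 hcrossE p hp).edges →
          e ∈ (Stmt16.WE (Fintype.card V) c E hElt hdeg3 hcrossE q hq).edges → False :=
        fun p q hp hq hne ha hb =>
          Stmt16.WE_disjoint (Fintype.card V) c E hElt hdeg3 hcrossE p q hp hq hne e ha hb
      split at he1 <;> split at he2
      · refine key _ _ _ _ ?_ (SimpleGraph.Walk.edges_toPath_subset _ he1)
          (SimpleGraph.Walk.edges_toPath_subset _ he2)
        intro hpq
        apply hsne
        have e1 : f u = f u' := congrArg Prod.fst hpq
        have e2 : f v = f v' := congrArg Prod.snd hpq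
        rw [f.injective e1, f.injective e2]
      · rw [SimpleGraph.Walk.edges_reverse, List.mem_reverse] at he2
        refine key _ _ _ _ ?_ (SimpleGraph.Walk.edges_toPath_subset _ he1)
          (SimpleGraph.Walk.edges_toPath_subset _ he2)
        intro hpq
        apply hsne
        have e1 : f u = f v' := congrArg Prod.fst hpq
        have e2 : f v = f u' := congrArg Prod.snd hpq
        rw [f.injective e1, f.injective e2]
        exact Sym2.eq_swap
      · rw [SimpleGraph.Walk.edges_reverse, List.mem_reverse] at he1
        refine key _ _ _ _ ?_ (SimpleGraph.Walk.edges_toPath_subset _ he1)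
          (SimpleGraph.Walk.edges_toPath_subset _ he2)
        intro hpq
        apply hsne
        have e1 : f v = f u' := congrArg Prod.fst hpq
        have e2 : f u = f v' := congrArg Prod.snd hpq
        rw [f.injective e1, f.injective e2]
        exact Sym2.eq_swap
      · rw [SimpleGraph.Walk.edges_reverse, List.mem_reverse] at he1 he2
        refine key _ _ _ _ ?_ (SimpleGraph.Walk.edges_toPath_subset _ he1)
          (SimpleGraph.Walk.edges_toPath_subset _ he2)
        intro hpq
        apply hsne
        have e1 : f v = f v' := congrArg Prod.fst hpq
        have e2 : f u = f u' := congrArg Prod.snd hpq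
        rw [f.injective e1, f.injective e2]
    · intro u v h x hx hne1 hne2 hr
      obtain ⟨w, hw⟩ := hr
      dsimp only at hx
      split at hx
      · have hx' := SimpleGraph.Walk.support_toPath_subset _ hx
        exact Stmt16.WE_support_mem (Fintype.card V) c E hElt hdeg3 hcrossE (f u, f v) _ x hx'
          hne1 hne2 (f w) hw.symm
      · rw [SimpleGraph.Walk.support_reverse, List.mem_reverse] at hx
        have hx' := SimpleGraph.Walk.support_toPath_subset _ hx
        exact Stmt16.WE_support_mem (Fintype.card V) c E hElt hdeg3 hcrossE (f v, f u) _ x hx'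
          hne2 hne1 (f w) hw.symm
end
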